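/- arXiv:1809.06921 — 7 statements merged into one kernel-verified Lean document; each statement's English description precedes it below -/
import Mathlib

section
/- Let f be a q-periodic arithmetical function with values in ℂ. If ∑_{a=1}^{q} f(a) = 0, then the series ∑_{n=1}^∞ f(n)/n converges. -/
open Finset Filter Topology

/-- If `f` is `q`-periodic and `∑_{a=1}^q f a = 0`, then `∑_{n≥1} f n / n` converges. -/
theorem converges_of_periodic_sum_zero (q : ℕ) (hq : 0 < q) (f : ℕ → ℂ)
    (hper : ∀ n : ℕ, f (n + q) = f n)
    (hsum : ∑ a ∈ Finset.Icc 1 q, f a = 0) :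
    ∃ l : ℂ, Tendsto (fun N : ℕ => ∑ n ∈ Finset.Icc 1 N, f n / n) atTop (𝓝 l) := by
  set z : ℕ → ℂ := fun i => f (i + 1) with hz
  set S : ℕ → ℂ := fun n => ∑ i ∈ range n, z i with hS
  -- block sums vanish
  have hblock : ∀ n : ℕ, ∑ j ∈ range q, f (n + j + 1) = 0 := by
    intro n
    induction n with
    | zero =>
      have : ∑ j ∈ range q, f (0 + j + 1) = ∑ a ∈ Finset.Icc 1 q, f a := by
        rw [show Finset.Icc 1 q = Finset.Ico 1 (q + 1) by rfl, Finset.sum_Ico_eq_sum_range]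
        simp [add_comm]
      rw [this, hsum]
    | succ n ih =>
      have key : ∑ j ∈ range q, f (n + 1 + j + 1) =
          ∑ j ∈ range q, f (n + j + 1) - f (n + 1) + f (n + q + 1) := by
        have e1 : ∑ j ∈ range (q+1), f (n+j+1) = ∑ k ∈ range q, f (n+(k+1)+1) + f (n+0+1) :=
          Finset.sum_range_succ' (fun j => f (n+j+1)) q
        have e2 : ∑ j ∈ range (q+1), f (n+j+1) = ∑ j ∈ range q, f (n+j+1) + f (n+q+1) :=
          Finset.sum_range_succ (fun j => f (n+j+1)) q
        have e3 : ∑ j ∈ range q, f (n + 1 + j + 1) = ∑ k ∈ range q, f (n+(k+1)+1) :=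
          Finset.sum_congr rfl (fun j _ => by ring_nf)
        rw [e3]
        simp only [add_zero] at e1
        linear_combination e2 - e1
      rw [key, ih]
      have : f (n + q + 1) = f (n + 1) := by
        have := hper (n + 1); rw [show n + 1 + q = n + q + 1 by ring] at this; exact this
      rw [this]; ring
  have hSper : ∀ n : ℕ, S (n + q) = S n := by
    intro n
    have : S (n + q) = S n + ∑ j ∈ range q, f (n + j + 1) := by
      rw [hS]
      simp only
      rw [Finset.sum_range_add]
    rw [this, hblock, add_zero]
  have hSmod : ∀ n : ℕ, S n = S (n % q) := by
    intro n
    induction n using Nat.strong_induction_on with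
    | _ n ih =>
      by_cases h : n < q
      · rw [Nat.mod_eq_of_lt h]
      · push_neg at h
        have h1 : n = (n - q) + q := by omega
        have h2 : n % q = (n - q) % q := by
          conv_lhs => rw [h1]
          rw [Nat.add_mod_right]
        rw [h2]
        conv_lhs => rw [h1]
        rw [hSper]
        exact ih (n - q) (by omega)
  -- bound
  set b : ℝ := ∑ i ∈ range q, ‖f (i + 1)‖ with hb
  have hbound : ∀ n : ℕ, ‖S n‖ ≤ b := by
    intro n
    rw [hSmod n]
    calc ‖S (n % q)‖ ≤ ∑ i ∈ range (n % q), ‖z i‖ := norm_sum_le _ _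
      _ ≤ b := by
          apply Finset.sum_le_sum_of_subset_of_nonneg
          · exact Finset.range_subset_range.mpr (Nat.mod_lt n hq).le
          · intro i _ _; exact norm_nonneg _
  -- Dirichlet's test
  have hanti : Antitone (fun n : ℕ => ((n : ℝ) + 1)⁻¹) := by
    intro m n hmn
    apply inv_anti₀
    · positivity
    · exact add_le_add_left (by exact_mod_cast hmn) 1
  have h0 : Tendsto (fun n : ℕ => ((n : ℝ) + 1)⁻¹) atTop (𝓝 0) :=
    tendsto_one_div_add_atTop_nhds_zero_nat.congr (fun n => by rw [one_div])
  have hcauchy : CauchySeq fun n => ∑ i ∈ range n, ((i : ℝ) + 1)⁻¹ • z i :=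
    hanti.cauchySeq_series_mul_of_tendsto_zero_of_bounded h0 hbound
  obtain ⟨l, hl⟩ := cauchySeq_tendsto_of_complete hcauchy
  refine ⟨l, ?_⟩
  have heq : ∀ N : ℕ, ∑ n ∈ Finset.Icc 1 N, f n / n = ∑ i ∈ range N, ((i : ℝ) + 1)⁻¹ • z i := by
    intro N
    rw [show Finset.Icc 1 N = Finset.Ico 1 (N + 1) by rfl, Finset.sum_Ico_eq_sum_range]
    simp only [add_tsub_cancel_right]
    apply Finset.sum_congr rfl
    intro i _
    rw [hz]
    simp only [Complex.real_smul]
    push_cast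
    rw [add_comm 1 i]
    ring
  exact hl.congr (fun N => (heq N).symm)
end

section
/- Let f be an odd q-periodic arithmetical function (f(q-n) = -f(n) for all n) with f(q) = 0 and f̂(q) = 0. Then L(1,f) = ∑_{n=1}^∞ f(n)/n = -(iπ/q) ∑_{a=1}^{q} a f̂(a), where f̂ is the Fourier transform of f. -/
open Finset Filter Topology

open Finset Filter Topology Complex

lemma tendsto_sum_pow_div (ζ : ℂ) (hz : ‖ζ‖ = 1) (h1 : ζ ≠ 1) :
    Tendsto (fun N : ℕ => ∑ n ∈ range N, ζ ^ n / n) atTop (𝓝 (-Complex.log (1 - ζ))) := by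
  have hne : (1 : ℂ) - ζ ≠ 0 := by
    intro h; apply h1; linear_combination -h
  have hnepos : 0 < ‖(1:ℂ) - ζ‖ := norm_pos_iff.mpr hne
  set w : ℕ → ℂ := fun n => ζ ^ n / ((1 - ζ) * n) with hw
  set d : ℕ → ℂ := fun n => ζ ^ n / n - (w n - w (n + 1)) with hd
  have hdval : ∀ n : ℕ, n ≠ 0 → d n = -ζ ^ (n + 1) / ((1 - ζ) * n * (n + 1)) := by
    intro n hn
    have hn' : (n : ℂ) ≠ 0 := Nat.cast_ne_zero.mpr hn
    have hn1 : ((n : ℂ) + 1) ≠ 0 := Nat.cast_add_one_ne_zero n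
    simp only [hd, hw]
    push_cast
    field_simp
    ring
  have hsumd : Summable d := by
    have hb : Summable (fun n : ℕ => ‖(1:ℂ) - ζ‖⁻¹ * (1 / (n:ℝ) ^ 2)) :=
      (Real.summable_one_div_nat_pow.mpr one_lt_two).mul_left _
    apply Summable.of_norm_bounded_eventually_nat hb
    filter_upwards [eventually_ge_atTop 1] with n hn
    rw [hdval n (by omega)]
    have hnR : (1:ℝ) ≤ (n:ℝ) := by exact_mod_cast hn
    have h3 : ‖(n:ℂ) + 1‖ = (n:ℝ) + 1 := by
      have h : ((n : ℂ) + 1) = ((n + 1 : ℕ) : ℂ) := by push_cast; ring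
      rw [h, Complex.norm_natCast]; push_cast; ring
    have h4 : ‖(1:ℂ) - ζ‖⁻¹ * (1 / (n:ℝ) ^ 2) = (‖(1:ℂ) - ζ‖ * (n:ℝ) ^ 2)⁻¹ := by
      field_simp
    rw [norm_div, norm_neg, norm_pow, hz, one_pow, norm_mul, norm_mul, h3,
      Complex.norm_natCast, h4, one_div]
    apply inv_anti₀
    · positivity
    · nlinarith
  have hwlim : Tendsto w atTop (𝓝 0) := by
    have h0 : Tendsto (fun n : ℕ => ‖(1:ℂ) - ζ‖⁻¹ * (1 / (n:ℝ))) atTop (𝓝 (‖(1:ℂ) - ζ‖⁻¹ * 0)) :=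
      (tendsto_one_div_atTop_nhds_zero_nat).const_mul _
    rw [mul_zero] at h0
    apply squeeze_zero_norm _ h0
    intro n
    rw [hw]
    rw [norm_div, norm_pow, hz, one_pow, norm_mul, Complex.norm_natCast, one_div, mul_inv,
      one_div]
  have key : Tendsto (fun N : ℕ => ∑ n ∈ range N, ζ ^ n / n) atTop (𝓝 (∑' n, d n)) := by
    have h1' : ∀ N : ℕ, ∑ n ∈ range N, ζ ^ n / n
        = (∑ n ∈ range N, d n) + (w 0 - w N) := by
      intro N
      rw [← Finset.sum_range_sub' w N]
      rw [← Finset.sum_add_distrib]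
      congr 1; ext n; simp [hd]
    simp only [h1']
    have hw0 : w 0 = 0 := by simp [hw]
    rw [hw0]
    have h6 := (hsumd.hasSum.tendsto_sum_nat).add ((tendsto_const_nhds (x := (0:ℂ))).sub hwlim)
    simpa using h6
  -- identify the limit via Abel's theorem
  haveI : (Filter.map Complex.ofReal (𝓝[<] (1:ℝ))).NeBot := Filter.map_neBot
  have abel := Complex.tendsto_tsum_powerSeries_nhdsWithin_lt key
  have hcont : Tendsto (fun z : ℂ => ∑' n : ℕ, (ζ ^ n / n) * z ^ n)
      ((𝓝[<] (1:ℝ)).map Complex.ofReal) (𝓝 (-Complex.log (1 - ζ))) := by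
    have hmem : (1 : ℂ) - ζ ∈ Complex.slitPlane := by
      rw [Complex.mem_slitPlane_iff]
      rcases eq_or_ne ζ.im 0 with him | him
      · left
        have habs : ‖ζ‖ = 1 := hz
        have h4 := Complex.sq_norm ζ
        rw [Complex.normSq_apply, him, habs] at h4
        have h5 : (ζ.re - 1) * (ζ.re + 1) = 0 := by nlinarith
        rcases mul_eq_zero.mp h5 with h | h
        · exfalso; apply h1; apply Complex.ext <;> simp [him]; linarith
        · simp only [Complex.sub_re, Complex.one_re]; nlinarith
      · right; simpa [Complex.sub_im] using him
    have h6 : ContinuousAt (fun z : ℂ => (1:ℂ) - ζ * z) 1 := by fun_prop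
    have hc : ContinuousAt (fun z : ℂ => -Complex.log (1 - ζ * z)) 1 :=
      (h6.clog (by simpa using hmem)).neg
    have h5 : Tendsto Complex.ofReal (𝓝[<] (1:ℝ)) (𝓝 (1:ℂ)) :=
      (Complex.continuous_ofReal.tendsto 1).mono_left nhdsWithin_le_nhds
    have hlim : Tendsto (fun z : ℂ => -Complex.log (1 - ζ * z))
        ((𝓝[<] (1:ℝ)).map Complex.ofReal) (𝓝 (-Complex.log (1 - ζ))) := by
      rw [tendsto_map'_iff]
      have := hc.tendsto.comp h5
      simpa using this
    apply hlim.congr'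
    rw [eventuallyEq_iff_exists_mem]
    refine ⟨Complex.ofReal '' Set.Ioo (-1) 1, ?_, ?_⟩
    · exact Filter.image_mem_map (Ioo_mem_nhdsLT_of_mem (by norm_num : (1:ℝ) ∈ Set.Ioc (-1) 1))
    · rintro _ ⟨x, hx, rfl⟩
      have hxn : ‖ζ * x‖ < 1 := by
        rw [norm_mul, hz, one_mul, Complex.norm_real, Real.norm_eq_abs, abs_lt]
        exact ⟨hx.1, hx.2⟩
      have h8 := (Complex.hasSum_taylorSeries_neg_log hxn).tsum_eq
      show -Complex.log (1 - ζ * x) = ∑' n : ℕ, ζ ^ n / n * (x:ℂ) ^ n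
      rw [← h8]
      exact tsum_congr fun n => by rw [mul_pow]; ring
  exact tendsto_nhds_unique abel hcont ▸ key

open Finset Filter Topology Complex Real

lemma arg_one_sub_exp {θ : ℝ} (h1 : 0 < θ) (h2 : θ < 2*Real.pi) :
    ((1:ℂ) - Complex.exp ((θ:ℂ) * Complex.I)).arg = (θ - Real.pi)/2 := by
  have hsin : 0 < Real.sin (θ/2) :=
    Real.sin_pos_of_pos_of_lt_pi (by linarith) (by linarith)
  have hid : (1:ℂ) - Complex.exp ((θ:ℂ)*Complex.I)
      = ((2*Real.sin (θ/2) : ℝ) : ℂ)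
        * ((Real.cos ((θ-Real.pi)/2) : ℂ) + (Real.sin ((θ-Real.pi)/2) : ℂ)*Complex.I) := by
    have hcos : Real.cos ((θ-Real.pi)/2) = Real.sin (θ/2) := by
      rw [show (θ-Real.pi)/2 = θ/2 - Real.pi/2 by ring, Real.cos_sub_pi_div_two]
    have hsin' : Real.sin ((θ-Real.pi)/2) = -Real.cos (θ/2) := by
      rw [show (θ-Real.pi)/2 = θ/2 - Real.pi/2 by ring, Real.sin_sub_pi_div_two]
    apply Complex.ext
    · simp only [Complex.sub_re, Complex.one_re, Complex.mul_re, Complex.add_re,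
        Complex.ofReal_re, Complex.mul_im, Complex.add_im, Complex.ofReal_im,
        Complex.I_re, Complex.I_im, Complex.exp_ofReal_mul_I_re]
      rw [hcos]
      have hc2 := Real.cos_two_mul (θ/2)
      have hs2 := Real.sin_sq_add_cos_sq (θ/2)
      rw [show 2*(θ/2) = θ by ring] at hc2
      nlinarith
    · simp only [Complex.sub_im, Complex.one_im, Complex.mul_im, Complex.add_re,
        Complex.add_im, Complex.ofReal_re, Complex.ofReal_im, Complex.mul_re,
        Complex.I_re, Complex.I_im, Complex.exp_ofReal_mul_I_im]
      rw [hsin']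
      have hs2 := Real.sin_two_mul (θ/2)
      rw [show 2*(θ/2) = θ by ring] at hs2
      nlinarith [hs2]
  rw [hid, Complex.arg_real_mul _ (by linarith : (0:ℝ) < 2*Real.sin (θ/2)),
    Complex.ofReal_cos, Complex.ofReal_sin, Complex.arg_cos_add_sin_mul_I]
  constructor
  · have := Real.pi_pos; linarith
  · have := Real.pi_pos; linarith

lemma log_one_sub_exp_diff {θ : ℝ} (h1 : 0 < θ) (h2 : θ < 2*Real.pi) :
    Complex.log (1 - Complex.exp (((2*Real.pi - θ : ℝ):ℂ) * Complex.I))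
      - Complex.log (1 - Complex.exp ((θ:ℂ) * Complex.I))
      = ((Real.pi : ℂ) - θ) * Complex.I := by
  have harg := arg_one_sub_exp h1 h2
  have harg' := arg_one_sub_exp (θ := 2*Real.pi - θ) (by linarith) (by linarith)
  set w := (1:ℂ) - Complex.exp ((θ:ℂ)*Complex.I) with hwdef
  set w' := (1:ℂ) - Complex.exp (((2*Real.pi - θ : ℝ):ℂ)*Complex.I) with hwdef'
  have hconj : w' = starRingEnd ℂ w := by
    rw [hwdef, hwdef', map_sub, map_one]
    congr 1
    rw [← Complex.exp_conj]
    rw [show starRingEnd ℂ ((θ:ℂ)*Complex.I) = -(θ:ℂ)*Complex.I by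
      rw [map_mul, Complex.conj_I, Complex.conj_ofReal]; ring]
    rw [show ((2*Real.pi - θ : ℝ):ℂ)*Complex.I
        = 2*(Real.pi:ℂ)*Complex.I + -(θ:ℂ)*Complex.I by push_cast; ring]
    rw [Complex.exp_add, Complex.exp_two_pi_mul_I, one_mul]
  have habs : ‖w'‖ = ‖w‖ := by rw [hconj, Complex.norm_conj]
  apply Complex.ext
  · rw [Complex.sub_re, Complex.log_re, Complex.log_re, habs, sub_self]
    rw [show ((Real.pi : ℂ) - θ) = ((Real.pi - θ : ℝ) : ℂ) by push_cast; ring]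
    simp
  · rw [Complex.sub_im, Complex.log_im, Complex.log_im, harg, harg']
    rw [show ((Real.pi : ℂ) - θ) = ((Real.pi - θ : ℝ) : ℂ) by push_cast; ring]
    simp
    ring

open Finset Filter Topology Complex

lemma sum_exp_orth (q : ℕ) (hq : 0 < q) (m : ℤ) :
    ∑ a ∈ Finset.Icc 1 q, Complex.exp (2*(Real.pi:ℂ)*Complex.I*a*m/q)
      = if (q:ℤ) ∣ m then (q:ℂ) else 0 := by
  have hq' : (q:ℂ) ≠ 0 := Nat.cast_ne_zero.mpr hq.ne'
  have hterm : ∀ a : ℕ, Complex.exp (2*(Real.pi:ℂ)*Complex.I*a*m/q)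
      = Complex.exp (2*(Real.pi:ℂ)*Complex.I*m/q) ^ a := by
    intro a
    rw [← Complex.exp_nat_mul]
    congr 1; ring
  simp only [hterm]
  set ζ := Complex.exp (2*(Real.pi:ℂ)*Complex.I*m/q) with hζdef
  by_cases hdvd : (q:ℤ) ∣ m
  · obtain ⟨k, hk⟩ := hdvd
    have hζ : ζ = 1 := by
      rw [hζdef, hk]
      rw [show 2*(Real.pi:ℂ)*Complex.I*((q*k : ℤ):ℂ)/q = (k:ℂ)*(2*Real.pi*Complex.I) by
        push_cast; field_simp]
      exact Complex.exp_int_mul_two_pi_mul_I k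
    rw [hζ, if_pos (show (q:ℤ) ∣ m from ⟨k, hk⟩)]
    simp [Nat.card_Icc]
  · rw [if_neg hdvd]
    have hζq : ζ ^ q = 1 := by
      rw [hζdef, ← Complex.exp_nat_mul]
      rw [show (q:ℂ) * (2*(Real.pi:ℂ)*Complex.I*m/q) = (m:ℂ)*(2*Real.pi*Complex.I) by
        field_simp]
      exact Complex.exp_int_mul_two_pi_mul_I m
    have hζ1 : ζ ≠ 1 := by
      intro h
      rw [hζdef, Complex.exp_eq_one_iff] at h
      obtain ⟨n, hn⟩ := h
      apply hdvd
      have hne : 2*(Real.pi:ℂ)*Complex.I ≠ 0 :=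
        mul_ne_zero (mul_ne_zero two_ne_zero
          (Complex.ofReal_ne_zero.mpr Real.pi_ne_zero)) Complex.I_ne_zero
      have h2 : (2*(Real.pi:ℂ)*Complex.I) * m = (2*(Real.pi:ℂ)*Complex.I) * (n*q) := by
        field_simp at hn
        linear_combination (2*(Real.pi:ℂ)*Complex.I) * hn
      have h3 : (m:ℂ) = (n:ℂ)*q := mul_left_cancel₀ hne h2
      have h4 : m = n * q := by exact_mod_cast h3
      exact ⟨n, by rw [h4]; ring⟩
    have hre : ∑ a ∈ Finset.Icc 1 q, ζ ^ a = ζ * ∑ a ∈ Finset.range q, ζ ^ a := by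
      rw [← Finset.Ico_add_one_right_eq_Icc, Finset.sum_Ico_eq_sum_range]
      rw [Finset.mul_sum]
      exact Finset.sum_congr rfl fun a _ => by rw [pow_add, pow_one]
    rw [hre, geom_sum_eq hζ1, hζq]
    simp

open Finset Filter Topology


/-- For an odd `q`-periodic function `f` with `f q = 0` and `f̂ q = 0`,
`L(1,f) = ∑_{n≥1} f n / n = -(iπ/q) ∑_{a=1}^q a · f̂ a`. -/
theorem L_one_odd_periodic (q : ℕ) (hq : 0 < q) (f : ℕ → ℂ)
    (hper : ∀ n : ℕ, f (n + q) = f n)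
    (hodd : ∀ n : ℕ, n ≤ q → f (q - n) = -f n)
    (fhat : ℕ → ℂ)
    (hfhat : ∀ b : ℕ, fhat b = (1 / q) * ∑ a ∈ Finset.Icc 1 q,
        f a * Complex.exp (-2 * Real.pi * Complex.I * a * b / q))
    (hfq : f q = 0) (hfhatq : fhat q = 0) :
    Tendsto (fun N : ℕ => ∑ n ∈ Finset.Icc 1 N, f n / n) atTop
      (𝓝 (-(Complex.I * Real.pi / q) * ∑ a ∈ Finset.Icc 1 q, (a : ℂ) * fhat a)) := by
  have hq' : (q:ℂ) ≠ 0 := Nat.cast_ne_zero.mpr hq.ne'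
  have hqR : (0:ℝ) < q := by exact_mod_cast hq
  have hπ := Real.pi_pos
  set θ : ℕ → ℝ := fun a => 2*Real.pi*a/q with hθ
  set E : ℕ → ℂ := fun a => Complex.exp ((θ a : ℂ) * Complex.I) with hE
  have hθa : ∀ a : ℕ, θ a = 2*Real.pi*a/q := fun _ => rfl
  have hEa : ∀ a : ℕ, E a = Complex.exp ((θ a : ℂ) * Complex.I) := fun _ => rfl
  have hf0 : f 0 = 0 := by
    have h := hper 0; rw [zero_add] at h; rw [← h, hfq]
  have hmul : ∀ n k : ℕ, f (n + q * k) = f n := by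
    intro n k
    induction k with
    | zero => simp
    | succ k ih => rw [Nat.mul_succ, ← Nat.add_assoc, hper, ih]
  have hfmod : ∀ n : ℕ, f n = f (n % q) := by
    intro n
    have h := hmul (n % q) (n / q)
    rw [Nat.mod_add_div] at h
    exact h
  have hEpow : ∀ a n : ℕ, E a ^ n = Complex.exp (2*(Real.pi:ℂ)*Complex.I*a*n/q) := by
    intro a n
    rw [hEa, ← Complex.exp_nat_mul]
    congr 1
    rw [hθa]
    push_cast
    field_simp
  -- Fourier inversion
  have S1 : ∀ n : ℕ, ∑ a ∈ Finset.Icc 1 q, fhat a * E a ^ n = f n := by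
    intro n
    have expand : ∀ a : ℕ, fhat a * E a ^ n
        = (1/(q:ℂ)) * ∑ b ∈ Finset.Icc 1 q,
            f b * Complex.exp (2*(Real.pi:ℂ)*Complex.I*a*(((n:ℤ) - b : ℤ):ℂ)/q) := by
      intro a
      rw [hfhat a, hEpow a n, mul_assoc, Finset.sum_mul]
      congr 1
      apply Finset.sum_congr rfl
      intro b _
      rw [mul_assoc, ← Complex.exp_add]
      congr 1
      exact congrArg Complex.exp (by push_cast; field_simp; ring)
    rw [Finset.sum_congr rfl (fun a _ => expand a), ← Finset.mul_sum, Finset.sum_comm]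
    have orth : ∀ b : ℕ, ∑ a ∈ Finset.Icc 1 q,
        f b * Complex.exp (2*(Real.pi:ℂ)*Complex.I*a*(((n:ℤ) - b : ℤ):ℂ)/q)
        = f b * (if (q:ℤ) ∣ ((n:ℤ) - b) then (q:ℂ) else 0) := by
      intro b
      rw [← Finset.mul_sum, sum_exp_orth q hq ((n:ℤ) - b)]
    rw [Finset.sum_congr rfl (fun b _ => orth b)]
    set b₀ : ℕ := if n % q = 0 then q else n % q with hb₀
    have hb₀mem : b₀ ∈ Finset.Icc 1 q := by
      rw [hb₀]
      have := Nat.mod_lt n hq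
      by_cases h : n % q = 0 <;> simp [h] <;> omega
    have hdvd₀ : (q:ℤ) ∣ (n:ℤ) - b₀ := by
      rw [hb₀]
      by_cases h : n % q = 0
      · simp only [if_pos h]
        have h1 : (q:ℤ) ∣ (n:ℤ) := Int.natCast_dvd_natCast.mpr (Nat.dvd_of_mod_eq_zero h)
        exact dvd_sub h1 dvd_rfl
      · simp only [if_neg h]
        have h1 : (n:ℤ) % q = ((n % q : ℕ) : ℤ) := by push_cast; ring
        exact Int.dvd_self_sub_of_emod_eq h1
    have hchar : ∀ b ∈ Finset.Icc 1 q, ((q:ℤ) ∣ (n:ℤ) - b ↔ b = b₀) := by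
      intro b hb
      rw [Finset.mem_Icc] at hb
      constructor
      · intro hd
        have h2 : (q:ℤ) ∣ (b:ℤ) - b₀ := by
          have := dvd_sub hdvd₀ hd
          have h3 : (n:ℤ) - b₀ - ((n:ℤ) - b) = (b:ℤ) - b₀ := by ring
          rwa [h3] at this
        have hb₀' : 1 ≤ b₀ ∧ b₀ ≤ q := Finset.mem_Icc.mp hb₀mem
        have habs : |(b:ℤ) - b₀| < q := by
          rw [abs_lt]
          constructor <;> [skip; skip] <;> omega
        have := Int.eq_zero_of_abs_lt_dvd h2 habs
        omega
      · rintro rfl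
        exact hdvd₀
    have hsum2 : ∑ b ∈ Finset.Icc 1 q, f b * (if (q:ℤ) ∣ ((n:ℤ) - b) then (q:ℂ) else 0)
        = f b₀ * q := by
      rw [Finset.sum_congr rfl (fun b hb => by rw [if_congr (hchar b hb) rfl rfl])]
      rw [Finset.sum_congr rfl (fun b _ => (mul_ite _ _ _ _ : f b * _ = _))]
      simp only [mul_zero]
      rw [Finset.sum_ite_eq' (Finset.Icc 1 q) b₀ (fun b => f b * q), if_pos hb₀mem]
    rw [hsum2]
    have hfb₀ : f b₀ = f n := by
      rw [hb₀, hfmod n]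
      by_cases h : n % q = 0
      · rw [if_pos h, h, hfq, hf0]
      · rw [if_neg h]
    rw [hfb₀]
    field_simp
  -- fhat is odd
  have S2 : ∀ a : ℕ, a ≤ q → fhat (q - a) = -fhat a := by
    intro a ha
    rw [hfhat (q - a), hfhat a]
    rw [← mul_neg, ← Finset.sum_neg_distrib]
    congr 1
    have hstep1 : ∀ b : ℕ, b ≤ q →
        f b * Complex.exp (-2 * Real.pi * Complex.I * b * ((q - a : ℕ):ℂ) / q)
        = f b * Complex.exp (2*(Real.pi:ℂ)*Complex.I*b*a/q) := by
      intro b hb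
      congr 1
      rw [show (-2 * (Real.pi:ℂ) * Complex.I * b * ((q - a : ℕ):ℂ) / q)
          = 2*(Real.pi:ℂ)*Complex.I*b*a/q + ((-(b:ℤ)):ℂ) * (2*Real.pi*Complex.I) by
        rw [Nat.cast_sub ha]; push_cast; field_simp; ring]
      rw [Complex.exp_add]
      have h1 : Complex.exp (-((b:ℤ):ℂ) * (2*(Real.pi:ℂ)*Complex.I)) = 1 := by
        have h2 := Complex.exp_int_mul_two_pi_mul_I (-(b:ℤ))
        rwa [Int.cast_neg] at h2
      rw [h1, mul_one]
    rw [Finset.sum_congr rfl (fun b hb => hstep1 b (Finset.mem_Icc.mp hb).2)]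
    -- reflection
    set g : ℕ → ℂ := fun b => f b * Complex.exp (2*(Real.pi:ℂ)*Complex.I*b*a/q) with hg
    have hg0 : g 0 = 0 := by simp [hg, hf0]
    have hgq : g q = 0 := by simp [hg, hfq]
    have hext : ∀ G : ℕ → ℂ, G 0 = 0 → ∑ b ∈ Finset.Icc 1 q, G b
        = ∑ b ∈ Finset.range (q+1), G b := by
      intro G hG0
      rw [Finset.range_eq_Ico, ← Finset.Ico_add_one_right_eq_Icc]
      rw [← Finset.sum_Ico_consecutive G (show 0 ≤ 1 by omega) (show 1 ≤ q+1 by omega)]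
      simp [hG0]
    have hrefl : ∑ b ∈ Finset.Icc 1 q, g b = ∑ b ∈ Finset.Icc 1 q, g (q - b) := by
      rw [hext g hg0, hext (fun b => g (q - b)) (by simp [hgq])]
      rw [← Finset.sum_range_reflect]
      apply Finset.sum_congr rfl
      intro b hb
      congr 1 <;> omega
    rw [hrefl]
    apply Finset.sum_congr rfl
    intro b hb
    obtain ⟨hb1, hb2⟩ := Finset.mem_Icc.mp hb
    show f (q - b) * Complex.exp (2*(Real.pi:ℂ)*Complex.I*((q - b : ℕ):ℂ)*a/q)
      = -(f b * Complex.exp (-2 * Real.pi * Complex.I * b * a / q))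
    rw [hodd b hb2]
    rw [show (2*(Real.pi:ℂ)*Complex.I*((q - b : ℕ):ℂ)*a/q)
        = -2 * (Real.pi:ℂ) * Complex.I * b * a / q + ((a:ℤ):ℂ) * (2*(Real.pi:ℂ)*Complex.I) by
      rw [Nat.cast_sub hb2]; push_cast; field_simp; ring]
    rw [Complex.exp_add]
    have h1 : Complex.exp (((a:ℤ):ℂ) * (2*(Real.pi:ℂ)*Complex.I)) = 1 :=
      Complex.exp_int_mul_two_pi_mul_I (a:ℤ)
    rw [h1, mul_one]
    ring
  -- norm and nontriviality of E
  have hEnorm : ∀ a : ℕ, ‖E a‖ = 1 := fun a => Complex.norm_exp_ofReal_mul_I (θ a)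
  have hEne : ∀ a : ℕ, 1 ≤ a → a ≤ q - 1 → E a ≠ 1 := by
    intro a ha1 ha2 h
    rw [hE, Complex.exp_eq_one_iff] at h
    obtain ⟨n, hn⟩ := h
    have hI : (Complex.I : ℂ) ≠ 0 := Complex.I_ne_zero
    have h2 : ((θ a : ℝ) : ℂ) = ((n * (2*Real.pi) : ℝ) : ℂ) := by
      have := mul_right_cancel₀ hI (by rw [hn]; push_cast; ring :
        ((θ a : ℝ):ℂ) * Complex.I = ((n * (2*Real.pi) : ℝ):ℂ) * Complex.I)
      exact this
    have h3 : θ a = n * (2*Real.pi) := Complex.ofReal_inj.mp h2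
    rw [hθ] at h3
    simp only at h3
    have h4 : (a : ℝ) = n * q := by
      field_simp at h3
      nlinarith [h3]
    have h5 : (a : ℤ) = n * q := by exact_mod_cast h4
    have haq : a < q := by omega
    rcases le_or_gt n 0 with hn0 | hn0
    · have : (n : ℤ) * q ≤ 0 := mul_nonpos_of_nonpos_of_nonneg hn0 (by positivity)
      omega
    · have : (q:ℤ) ≤ n * q := le_mul_of_one_le_left (by positivity) hn0
      omega
  -- rewrite partial sums
  have hfn : ∀ N : ℕ, ∑ n ∈ Finset.Icc 1 N, f n / n
      = ∑ a ∈ Finset.Icc 1 q, fhat a * ∑ n ∈ Finset.Icc 1 N, E a ^ n / n := by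
    intro N
    have h1 : ∀ n : ℕ, f n / n = ∑ a ∈ Finset.Icc 1 q, fhat a * (E a ^ n / n) := by
      intro n
      rw [← S1 n, Finset.sum_div]
      exact Finset.sum_congr rfl fun a _ => by rw [mul_div_assoc]
    rw [Finset.sum_congr rfl (fun n _ => h1 n), Finset.sum_comm]
    exact Finset.sum_congr rfl fun a _ => by rw [← Finset.mul_sum]
  -- the limit
  set L : ℕ → ℂ := fun a => fhat a * (-Complex.log (1 - E a)) with hL
  have hLa : ∀ b : ℕ, L b = fhat b * (-Complex.log (1 - E b)) := fun _ => rfl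
  have hlim : Tendsto (fun N : ℕ => ∑ a ∈ Finset.Icc 1 q, fhat a * ∑ n ∈ Finset.Icc 1 N, E a ^ n / n)
      atTop (𝓝 (∑ a ∈ Finset.Icc 1 q, L a)) := by
    apply tendsto_finset_sum
    intro a ha
    by_cases haq : a = q
    · subst haq
      rw [hLa, hfhatq]
      simp only [zero_mul]
      exact tendsto_const_nhds
    · obtain ⟨ha1, ha2⟩ := Finset.mem_Icc.mp ha
      have hIcc : ∀ N : ℕ, ∑ n ∈ Finset.Icc 1 N, E a ^ n / n
          = ∑ n ∈ Finset.range (N+1), E a ^ n / n := by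
        intro N
        rw [Finset.range_eq_Ico, ← Finset.Ico_add_one_right_eq_Icc]
        rw [← Finset.sum_Ico_consecutive _ (show 0 ≤ 1 by omega) (show 1 ≤ N+1 by omega)]
        simp
      simp only [hIcc]
      show Tendsto _ atTop (𝓝 (fhat a * (-Complex.log (1 - E a))))
      apply Tendsto.const_mul
      exact (tendsto_sum_pow_div (E a) (hEnorm a) (hEne a ha1 (by omega))).comp
        (tendsto_add_atTop_nat 1)
  -- compute the value
  have heq : ∑ a ∈ Finset.Icc 1 q, L a
      = -(Complex.I * Real.pi / q) * ∑ a ∈ Finset.Icc 1 q, (a:ℂ) * fhat a := by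
    have hins : Finset.Icc 1 q = insert q (Finset.Icc 1 (q-1)) := by
      ext x; simp [Finset.mem_Icc, Finset.mem_insert]; omega
    have hnotmem : q ∉ Finset.Icc 1 (q-1) := by simp [Finset.mem_Icc]; omega
    have hLq : L q = 0 := by rw [hLa, hfhatq, zero_mul]
    have hT1 : ∑ a ∈ Finset.Icc 1 q, L a = ∑ a ∈ Finset.Icc 1 (q-1), L a := by
      rw [hins, Finset.sum_insert hnotmem, hLq, zero_add]
    have hrefl : ∑ a ∈ Finset.Icc 1 (q-1), L a = ∑ a ∈ Finset.Icc 1 (q-1), L (q - a) := by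
      apply Finset.sum_nbij' (i := fun a => q - a) (j := fun a => q - a)
      · intro a ha; rw [Finset.mem_Icc] at *; omega
      · intro a ha; rw [Finset.mem_Icc] at *; omega
      · intro a ha; rw [Finset.mem_Icc] at ha; omega
      · intro a ha; rw [Finset.mem_Icc] at ha; omega
      · intro a ha; rw [Finset.mem_Icc] at ha; congr 1; omega
    have hpair : ∀ a ∈ Finset.Icc 1 (q-1),
        L a + L (q - a) = fhat a * (((Real.pi:ℂ) - 2*(Real.pi:ℂ)*a/q) * Complex.I) := by
      intro a ha
      obtain ⟨ha1, ha2⟩ := Finset.mem_Icc.mp ha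
      have haq : a < q := by omega
      have haR : (0:ℝ) < a := by
        have : 0 < a := by omega
        exact_mod_cast this
      have hθpos : 0 < θ a := by
        rw [hθa]; positivity
      have hθlt : θ a < 2*Real.pi := by
        rw [hθa]
        rw [div_lt_iff₀ hqR]
        have : (a:ℝ) < q := by exact_mod_cast haq
        nlinarith
      have hEqa : E (q - a) = Complex.exp (((2*Real.pi - θ a : ℝ):ℂ) * Complex.I) := by
        rw [hEa]
        congr 2
        rw [hθa, hθa]
        rw [Nat.cast_sub (by omega : a ≤ q)]
        field_simp
      have hdiff := log_one_sub_exp_diff hθpos hθlt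
      rw [hLa, hLa]
      rw [S2 a (by omega), hEqa]
      have : fhat a * -Complex.log (1 - E a)
          + -fhat a * -Complex.log (1 - Complex.exp (((2*Real.pi - θ a : ℝ):ℂ) * Complex.I))
          = fhat a * (Complex.log (1 - Complex.exp (((2*Real.pi - θ a : ℝ):ℂ) * Complex.I))
              - Complex.log (1 - Complex.exp ((θ a:ℂ) * Complex.I))) := by
        rw [hEa]; ring
      rw [this, hdiff]
      congr 2
      rw [hθa]
      push_cast
      field_simp
    have hS0 : ∑ a ∈ Finset.Icc 1 q, fhat a = 0 := by
      have := S1 0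
      simp only [pow_zero, mul_one] at this
      rw [this, hf0]
    have hS0' : ∑ a ∈ Finset.Icc 1 (q-1), fhat a = 0 := by
      rw [hins, Finset.sum_insert hnotmem, hfhatq, zero_add] at hS0
      exact hS0
    have hSa : ∑ a ∈ Finset.Icc 1 (q-1), (a:ℂ) * fhat a
        = ∑ a ∈ Finset.Icc 1 q, (a:ℂ) * fhat a := by
      rw [hins, Finset.sum_insert hnotmem, hfhatq, mul_zero, zero_add]
    have h2T : (2:ℂ) * (∑ a ∈ Finset.Icc 1 (q-1), L a)
        = ∑ a ∈ Finset.Icc 1 (q-1), (L a + L (q - a)) := by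
      rw [Finset.sum_add_distrib, ← hrefl]; ring
    rw [Finset.sum_congr rfl hpair] at h2T
    have hsplit : ∑ a ∈ Finset.Icc 1 (q-1), fhat a * (((Real.pi:ℂ) - 2*(Real.pi:ℂ)*a/q) * Complex.I)
        = (Real.pi:ℂ) * Complex.I * (∑ a ∈ Finset.Icc 1 (q-1), fhat a)
          - (2*(Real.pi:ℂ)*Complex.I/q) * (∑ a ∈ Finset.Icc 1 (q-1), (a:ℂ) * fhat a) := by
      rw [Finset.mul_sum, Finset.mul_sum, ← Finset.sum_sub_distrib]
      apply Finset.sum_congr rfl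
      intro a _
      field_simp
    rw [hsplit, hS0', mul_zero, zero_sub, hSa] at h2T
    rw [hT1]
    linear_combination (1/2 : ℂ) * h2T
  rw [← heq]
  exact hlim.congr (fun N => (hfn N).symm)
end

section
/- Let f be an even q-periodic arithmetical function (f(q-n) = f(n)). Then L(s,f) satisfies the functional equation L(1-s, f) = 2 Γ(s) (q/(2π))^s cos(πs/2) L(s, f̂), where f̂ is the Fourier transform of f. -/
open Finset Filter Topology HurwitzZeta

/-- Functional equation for the `L`-series of an even `q`-periodic function:
`L(1-s, f) = 2 Γ(s) (q/2π)^s cos(πs/2) L(s, f̂)`. -/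
theorem functional_equation_even (q : ℕ) (hq : 0 < q) (f : ℤ → ℂ)
    (hper : ∀ n : ℤ, f (n + q) = f n)
    (heven : ∀ n : ℤ, f (q - n) = f n)
    (fhat : ℤ → ℂ)
    (hfhat : ∀ b : ℤ, fhat b = (1 / q) * ∑ a ∈ Finset.Icc 1 q,
        f a * Complex.exp (-2 * Real.pi * Complex.I * a * b / q))
    (L : (ℤ → ℂ) → ℂ → ℂ)
    (hL : ∀ (g : ℤ → ℂ) (s : ℂ), L g s = (q : ℂ) ^ (-s) * ∑ a ∈ Finset.Icc 1 q,
        g a * hurwitzZeta (↑((a : ℝ) / q) : UnitAddCircle) s)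
    (s : ℂ) (hs : ∀ n : ℕ, s ≠ -n) (hs1 : s ≠ 1) :
    L f (1 - s) = 2 * Complex.Gamma s * ((q : ℂ) / (2 * Real.pi)) ^ s *
      Complex.cos (Real.pi * s / 2) * L fhat s := by
  haveI : NeZero q := ⟨hq.ne'⟩
  have hqC : (q : ℂ) ≠ 0 := Nat.cast_ne_zero.mpr hq.ne'
  -- f factors through ZMod q
  have hp : Function.Periodic f (q : ℤ) := hper
  have hfact : ∀ a : ℤ, f a = f (((a : ZMod q)).val : ℤ) := by
    intro a
    obtain ⟨k, hk⟩ : (q : ℤ) ∣ a - (((a : ZMod q)).val : ℤ) := by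
      rw [← ZMod.intCast_zmod_eq_zero_iff_dvd]
      push_cast
      simp [ZMod.natCast_val, ZMod.intCast_cast]
    have ha : a = (((a : ZMod q)).val : ℤ) + k * q := by linarith
    nth_rewrite 1 [ha]
    exact (hp.int_mul k) _
  set Φ : ZMod q → ℂ := fun j => f (j.val : ℤ) with hΦ
  have hfΦ : ∀ a : ℤ, f a = Φ (a : ZMod q) := fun a => hfact a
  -- sum reindexing lemma
  have key : ∀ G : ZMod q → ℂ, ∑ a ∈ Finset.Icc 1 q, G ((a : ℕ) : ZMod q) = ∑ j : ZMod q, G j := by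
    intro G
    refine Finset.sum_nbij' (i := fun a => ((a : ℕ) : ZMod q))
      (j := fun b => if b = 0 then q else b.val) (fun a _ => Finset.mem_univ _) ?_ ?_ ?_ ?_
    · intro b _
      by_cases hb : b = 0
      · simp only [hb, ↓reduceIte]
        exact Finset.mem_Icc.mpr ⟨hq, le_rfl⟩
      · simp only [hb, if_neg hb, mem_Icc]
        exact ⟨Nat.one_le_iff_ne_zero.mpr (fun h => hb (by rwa [← ZMod.val_eq_zero])),
          (ZMod.val_lt b).le⟩
    · intro a ha
      rw [mem_Icc] at ha
      by_cases h0 : ((a : ℕ) : ZMod q) = 0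
      · have : q ∣ a := (ZMod.natCast_eq_zero_iff a q).mp h0
        have : a = q := le_antisymm ha.2 (Nat.le_of_dvd (by omega) this)
        simp [h0, this]
      · have hlt : a < q := by
          rcases lt_or_eq_of_le ha.2 with h | h
          · exact h
          · exfalso; exact h0 (by simp [h])
        simp [h0, ZMod.val_natCast_of_lt hlt]
    · intro b _
      by_cases hb : b = 0
      · simp [hb]
      · simp [hb, ZMod.natCast_val, ZMod.ringHom_map_cast]
    · intro a _; rfl
  -- L f = LFunction Φ
  have hLf : ∀ z : ℂ, L f z = ZMod.LFunction Φ z := by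
    intro z
    rw [hL, ZMod.LFunction]
    congr 1
    rw [← key (fun j => Φ j * hurwitzZeta (ZMod.toAddCircle j) z)]
    refine Finset.sum_congr rfl fun a _ => ?_
    rw [ZMod.toAddCircle_natCast]
    congr 1
    have := hfΦ (a : ℤ)
    rwa [Int.cast_natCast] at this
  -- fhat = (1/q) * dft Φ
  have hfhatΦ : ∀ b : ℤ, fhat b = (1 / (q : ℂ)) * (ZMod.dft Φ) (b : ZMod q) := by
    intro b
    rw [hfhat, ZMod.dft_apply]
    congr 1
    rw [← key (fun j => ZMod.stdAddChar (-(j * (b : ZMod q))) • Φ j)]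
    refine Finset.sum_congr rfl fun a _ => ?_
    simp only [smul_eq_mul]
    have harg : -(((a : ℕ) : ZMod q) * ((b : ℤ) : ZMod q)) = ((-(a * b) : ℤ) : ZMod q) := by
      push_cast; ring
    rw [harg, ZMod.stdAddChar_coe, mul_comm]
    congr 1
    · congr 1; push_cast; ring
    · have := hfΦ (a : ℤ)
      rwa [Int.cast_natCast] at this
  -- L fhat = (1/q) * LFunction (dft Φ)
  have hLfhat : L fhat s = (1 / (q : ℂ)) * ZMod.LFunction (ZMod.dft Φ) s := by
    rw [hL, ZMod.LFunction]
    rw [← key (fun j => (ZMod.dft Φ) j * hurwitzZeta (ZMod.toAddCircle j) s), mul_sum, mul_sum,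
      mul_sum]
    refine Finset.sum_congr rfl fun a _ => ?_
    rw [ZMod.toAddCircle_natCast]
    have := hfhatΦ (a : ℤ)
    rw [show (((a : ℤ) : ZMod q)) = ((a : ℕ) : ZMod q) by push_cast; rfl] at this
    rw [this]; ring
  -- Φ is even
  have hΦeven : Φ.Even := by
    intro j
    have h1 : ((((q : ℤ) - (j.val : ℤ) : ℤ)) : ZMod q) = -j := by
      push_cast
      simp
    have h2 := hfact ((q : ℤ) - (j.val : ℤ))
    rw [h1] at h2
    have h3 := heven (j.val : ℤ)
    rw [h2] at h3
    exact h3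
  have hdftneg : (ZMod.dft fun x => Φ (-x)) = ZMod.dft Φ := by
    congr 1
    funext x
    exact hΦeven x
  -- apply functional equation
  rw [hLf, ZMod.LFunction_one_sub Φ hs (Or.inr hs1), hLfhat, hdftneg]
  -- cosine identity
  have hcos : Complex.exp (Real.pi * Complex.I * s / 2) + Complex.exp (-Real.pi * Complex.I * s / 2)
      = 2 * Complex.cos (Real.pi * s / 2) := by
    rw [Complex.two_cos]
    congr 1 <;> [skip; skip] <;> congr 1 <;> ring
  -- cpow identity
  have hπpos : (0 : ℝ) < 2 * Real.pi := by positivity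
  have hpow : ((q : ℂ) / (2 * Real.pi)) ^ s = (q : ℂ) ^ s * ((2 * (Real.pi : ℂ))) ^ (-s) := by
    have h1 : ((q : ℂ) / (2 * Real.pi)) = (((q : ℝ)) : ℂ) * ((((2 * Real.pi)⁻¹ : ℝ)) : ℂ) := by
      push_cast; ring
    have ha : ((2 * Real.pi : ℝ) : ℂ).arg ≠ Real.pi := by
      rw [Complex.arg_ofReal_of_nonneg hπpos.le]; exact Real.pi_ne_zero.symm
    have h2 : (((2 * Real.pi)⁻¹ : ℝ) : ℂ) ^ s = (2 * (Real.pi : ℂ)) ^ (-s) := by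
      rw [Complex.ofReal_inv, Complex.inv_cpow _ _ ha, ← Complex.cpow_neg]
      congr 1
      push_cast; ring
    rw [h1, Complex.mul_cpow_ofReal_nonneg (Nat.cast_nonneg q) (by positivity), h2,
      Complex.ofReal_natCast]
  have hqpow : (q : ℂ) ^ (s - 1) = (q : ℂ) ^ s * (q : ℂ)⁻¹ := by
    rw [Complex.cpow_sub _ _ hqC, Complex.cpow_one, div_eq_mul_inv]
  rw [hqpow, hpow]
  have e1 : Complex.exp (Real.pi * Complex.I * s / 2) * ZMod.LFunction (ZMod.dft Φ) s +
      Complex.exp (-Real.pi * Complex.I * s / 2) * ZMod.LFunction (ZMod.dft Φ) s =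
      2 * Complex.cos (Real.pi * s / 2) * ZMod.LFunction (ZMod.dft Φ) s := by
    rw [← add_mul, hcos]
  calc (q : ℂ) ^ s * (q : ℂ)⁻¹ * (2 * ↑Real.pi) ^ (-s) * Complex.Gamma s *
        (Complex.exp (↑Real.pi * Complex.I * s / 2) * ZMod.LFunction (ZMod.dft Φ) s +
          Complex.exp (-↑Real.pi * Complex.I * s / 2) * ZMod.LFunction (ZMod.dft Φ) s)
      = (q : ℂ) ^ s * (q : ℂ)⁻¹ * (2 * ↑Real.pi) ^ (-s) * Complex.Gamma s *
        (2 * Complex.cos (Real.pi * s / 2) * ZMod.LFunction (ZMod.dft Φ) s) := by rw [e1]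
    _ = 2 * Complex.Gamma s * ((q : ℂ) ^ s * (2 * ↑Real.pi) ^ (-s)) *
        Complex.cos (↑Real.pi * s / 2) * (1 / (q : ℂ) * ZMod.LFunction (ZMod.dft Φ) s) := by
        field_simp
end

section
/- Let f be an odd q-periodic arithmetical function (f(q-n) = -f(n)). Then L(s,f) satisfies the functional equation L(1-s, f) = 2i Γ(s) (q/(2π))^s sin(πs/2) L(s, f̂), where f̂ is the Fourier transform of f. -/
open Finset Filter Topology HurwitzZeta

section aux

variable {q : ℕ} [NeZero q]

/-- Periodic functions factor through `ZMod q`. -/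
lemma per_congr {g : ℤ → ℂ} (hg : ∀ n : ℤ, g (n + q) = g n) {m n : ℤ}
    (h : (m : ZMod q) = n) : g m = g n := by
  have hp : Function.Periodic g (q : ℤ) := hg
  have hd : (q : ℤ) ∣ m - n := by
    rw [ZMod.intCast_eq_intCast_iff] at h
    exact Int.ModEq.dvd h.symm
  obtain ⟨k, hk⟩ := hd
  have hm : m = n + k * q := by linarith
  rw [hm]
  have := (hp.int_mul k) n
  push_cast at this ⊢
  exact this

/-- Convert a sum over `Icc 1 q` to a sum over `ZMod q`. -/
lemma sum_conv (g : ZMod q → ℂ) (G : ℕ → ℂ)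
    (h : ∀ a ∈ Finset.Icc 1 q, G a = g (a : ZMod q)) :
    ∑ a ∈ Finset.Icc 1 q, G a = ∑ j : ZMod q, g j := by
  have hq : 0 < q := NeZero.pos q
  refine Finset.sum_nbij' (fun a => (a : ZMod q))
    (fun j => if j.val = 0 then q else j.val) ?_ ?_ ?_ ?_ ?_
  · intro a _; exact Finset.mem_univ _
  · intro j _
    by_cases h0 : j.val = 0
    · simp only [h0, if_true, Finset.mem_Icc]
      exact ⟨hq, le_refl q⟩
    · simp only [h0, if_false, Finset.mem_Icc]
      exact ⟨Nat.one_le_iff_ne_zero.mpr h0, (ZMod.val_lt j).le⟩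
  · intro a ha
    rw [Finset.mem_Icc] at ha
    rcases eq_or_lt_of_le ha.2 with rfl | hlt
    · simp only [ZMod.natCast_self, ZMod.val_zero, if_true]
    · rw [ZMod.val_natCast_of_lt hlt, if_neg (by omega)]
  · intro j _
    by_cases h0 : j.val = 0
    · simp only [h0, if_true, ZMod.natCast_self]
      exact ((ZMod.val_eq_zero j).mp h0).symm
    · simp only [h0, if_false, ZMod.natCast_zmod_val]
  · exact h

end aux
/-- Functional equation for the `L`-series of an odd `q`-periodic function:
`L(1-s, f) = 2i Γ(s) (q/2π)^s sin(πs/2) L(s, f̂)`. -/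
theorem functional_equation_odd (q : ℕ) (hq : 0 < q) (f : ℤ → ℂ)
    (hper : ∀ n : ℤ, f (n + q) = f n)
    (hodd : ∀ n : ℤ, f (q - n) = -f n)
    (fhat : ℤ → ℂ)
    (hfhat : ∀ b : ℤ, fhat b = (1 / q) * ∑ a ∈ Finset.Icc 1 q,
        f a * Complex.exp (-2 * Real.pi * Complex.I * a * b / q))
    (L : (ℤ → ℂ) → ℂ → ℂ)
    (hL : ∀ (g : ℤ → ℂ) (s : ℂ), L g s = (q : ℂ) ^ (-s) * ∑ a ∈ Finset.Icc 1 q,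
        g a * hurwitzZeta (↑((a : ℝ) / q) : UnitAddCircle) s)
    (s : ℂ) (hs : ∀ n : ℕ, s ≠ -n) (hs1 : s ≠ 1) :
    L f (1 - s) = 2 * Complex.I * Complex.Gamma s * ((q : ℂ) / (2 * Real.pi)) ^ s *
      Complex.sin (Real.pi * s / 2) * L fhat s := by
  haveI : NeZero q := ⟨hq.ne'⟩
  have hq0 : (q : ℂ) ≠ 0 := Nat.cast_ne_zero.mpr hq.ne'
  -- f(-n) = -f(n)
  have hneg : ∀ n : ℤ, f (-n) = -f n := by
    intro n
    rw [← hodd n, ← hper (-n)]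
    ring_nf
  -- f 0 = 0
  have hf0 : f 0 = 0 := by
    have h := hneg 0
    rw [neg_zero] at h
    have : (2 : ℂ) * f 0 = 0 := by linear_combination h
    simpa using this
  -- the ZMod function
  set Φ : ZMod q → ℂ := fun j => f (j.val : ℤ) with hΦ
  have hΦ0 : Φ 0 = 0 := by simp [hΦ, hf0]
  -- fhat is periodic
  have hfhatper : ∀ n : ℤ, fhat (n + q) = fhat n := by
    intro n
    rw [hfhat, hfhat]
    congr 1
    refine Finset.sum_congr rfl fun a _ => ?_
    congr 1
    have he : -2 * (Real.pi : ℂ) * Complex.I * a * (n + q) / q =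
        -2 * (Real.pi : ℂ) * Complex.I * a * n / q + ((-a : ℤ) : ℂ) * (2 * Real.pi * Complex.I) := by
      push_cast
      field_simp
      ring
    push_cast
    push_cast at he
    rw [he, Complex.exp_add]
    have h1' : Complex.exp (-(a : ℂ) * (2 * Real.pi * Complex.I)) = 1 := by
      rw [show (-(a : ℂ)) * (2 * (Real.pi : ℂ) * Complex.I)
          = ((-(a : ℤ) : ℤ) : ℂ) * (2 * Real.pi * Complex.I) by push_cast; ring]
      exact Complex.exp_int_mul_two_pi_mul_I _
    rw [h1', mul_one]
  -- L g (for periodic g) equals ZMod.LFunction of its descent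
  have hLZ : ∀ (g : ℤ → ℂ), (∀ n : ℤ, g (n + q) = g n) → ∀ t : ℂ,
      L g t = ZMod.LFunction (fun j : ZMod q => g (j.val : ℤ)) t := by
    intro g hg t
    rw [hL, ZMod.LFunction]
    congr 1
    refine sum_conv _ _ fun a ha => ?_
    have h1 : g (a : ℤ) = g (((a : ZMod q).val : ℤ)) := by
      refine per_congr hg ?_
      push_cast
      simp [ZMod.natCast_zmod_val]
    have h2 : (↑((a : ℝ) / q) : UnitAddCircle) = ZMod.toAddCircle ((a : ZMod q)) := by
      rw [ZMod.toAddCircle_natCast]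
    rw [h1, h2]
  -- fhat's descent is (1/q) * dft Φ
  have hdft : ∀ j : ZMod q, fhat (j.val : ℤ) = (1 / q : ℂ) * ZMod.dft Φ j := by
    intro j
    rw [hfhat, ZMod.dft_apply]
    congr 1
    have : ∀ k : ZMod q, ZMod.stdAddChar (-(k * j)) • Φ k =
        Φ k * Complex.exp (-2 * Real.pi * Complex.I * k.val * j.val / q) := by
      intro k
      have hcast : -(k * j) = (((-(k.val * j.val) : ℤ)) : ZMod q) := by
        push_cast
        simp [ZMod.natCast_zmod_val]
      rw [hcast, ZMod.stdAddChar_coe, smul_eq_mul, mul_comm]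
      congr 1
      push_cast
      ring
    simp only [this]
    refine sum_conv _ _ fun a ha => ?_
    have h1 : f (a : ℤ) = Φ ((a : ZMod q)) := by
      refine per_congr hper ?_
      push_cast
      simp [ZMod.natCast_zmod_val]
    have hcast3 : ((((a : ZMod q)).val : ℤ) : ZMod q) = ((a : ℤ) : ZMod q) := by
      push_cast
      simp [ZMod.natCast_zmod_val]
    have hEper : ∀ n : ℤ, (fun m : ℤ =>
        Complex.exp (-2 * Real.pi * Complex.I * m * j.val / q)) (n + q) =
        (fun m : ℤ => Complex.exp (-2 * Real.pi * Complex.I * m * j.val / q)) n := by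
      intro n
      simp only
      have he : -2 * (Real.pi : ℂ) * Complex.I * ((n : ℂ) + q) * j.val / q =
          -2 * (Real.pi : ℂ) * Complex.I * n * j.val / q
            + ((-(j.val : ℤ)) : ℂ) * (2 * Real.pi * Complex.I) := by
        push_cast
        field_simp
        ring
      push_cast
      push_cast at he
      rw [he, Complex.exp_add]
      have h1' : Complex.exp (-(j.val : ℂ) * (2 * Real.pi * Complex.I)) = 1 := by
        rw [show (-(j.val : ℂ)) * (2 * (Real.pi : ℂ) * Complex.I)
            = ((-(j.val : ℤ) : ℤ) : ℂ) * (2 * Real.pi * Complex.I) by push_cast; ring]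
        exact Complex.exp_int_mul_two_pi_mul_I _
      rw [h1', mul_one]
    have hE := per_congr (g := fun m : ℤ =>
      Complex.exp (-2 * Real.pi * Complex.I * m * j.val / q)) hEper hcast3
    rw [h1]
    congr 1
    push_cast at hE ⊢
    exact hE.symm
  -- Φ is odd
  have hΦodd : (fun x : ZMod q => Φ (-x)) = -Φ := by
    funext j
    simp only [hΦ, Pi.neg_apply]
    rw [← hneg (j.val : ℤ)]
    refine per_congr hper ?_
    push_cast
    simp [ZMod.natCast_zmod_val]
  -- L fhat s = (1/q) * LFunction (dft Φ) s
  have hLfhat : L fhat s = (1 / q : ℂ) * ZMod.LFunction (ZMod.dft Φ) s := by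
    rw [hLZ fhat hfhatper s, ZMod.LFunction, ZMod.LFunction]
    simp only [hdft, Finset.mul_sum]
    exact Finset.sum_congr rfl fun j _ => by ring
  -- functional equation
  rw [hLZ f hper (1 - s), ZMod.LFunction_one_sub Φ hs (Or.inl hΦ0), hΦodd, map_neg]
  have hLneg : ZMod.LFunction (-(ZMod.dft Φ)) s = -ZMod.LFunction (ZMod.dft Φ) s := by
    simp only [ZMod.LFunction, Pi.neg_apply, neg_mul, Finset.sum_neg_distrib, mul_neg]
  rw [hLneg, hLfhat]
  -- now pure algebra
  have hsin : Complex.exp (Real.pi * Complex.I * s / 2)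
      - Complex.exp (-Real.pi * Complex.I * s / 2)
      = 2 * Complex.I * Complex.sin (Real.pi * s / 2) := by
    rw [Complex.sin]
    have e1 : -((Real.pi : ℂ) * s / 2) * Complex.I = -Real.pi * Complex.I * s / 2 := by ring
    have e2 : ((Real.pi : ℂ) * s / 2) * Complex.I = Real.pi * Complex.I * s / 2 := by ring
    rw [e1, e2]
    linear_combination (Complex.exp ((Real.pi : ℂ) * Complex.I * s / 2)
      - Complex.exp (-(Real.pi : ℂ) * Complex.I * s / 2)) * Complex.I_sq
  have hpow1 : (q : ℂ) ^ (s - 1) = (q : ℂ) ^ s / q := by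
    rw [Complex.cpow_sub _ _ hq0, Complex.cpow_one]
  have hpow2 : ((q : ℂ) / (2 * Real.pi)) ^ s = (q : ℂ) ^ s * ((2 * Real.pi : ℂ)) ^ (-s) := by
    have h2π : (0:ℝ) < 2 * Real.pi := by positivity
    have hcast : ((q : ℂ) / (2 * Real.pi)) = (((q : ℝ) * (2 * Real.pi)⁻¹ : ℝ) : ℂ) := by
      push_cast
      ring
    have harg : ((2 : ℂ) * Real.pi).arg ≠ Real.pi := by
      rw [show ((2 : ℂ) * Real.pi) = (((2 * Real.pi : ℝ)) : ℂ) by push_cast; ring,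
        Complex.arg_ofReal_of_nonneg h2π.le]
      exact fun h => Real.pi_ne_zero h.symm
    rw [hcast, Complex.ofReal_mul,
      Complex.mul_cpow_ofReal_nonneg (Nat.cast_nonneg q) (by positivity),
      Complex.ofReal_natCast]
    congr 1
    have hcast2 : (((2 * Real.pi)⁻¹ : ℝ) : ℂ) = ((2 * Real.pi : ℂ))⁻¹ := by push_cast; ring
    rw [hcast2, Complex.inv_cpow _ _ harg, Complex.cpow_neg]
  rw [hpow1, hpow2]
  have hexp : Complex.exp ((Real.pi : ℂ) * Complex.I * s / 2) *
        ZMod.LFunction (ZMod.dft Φ) s +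
      Complex.exp (-(Real.pi : ℂ) * Complex.I * s / 2) * -ZMod.LFunction (ZMod.dft Φ) s
      = 2 * Complex.I * Complex.sin (Real.pi * s / 2) * ZMod.LFunction (ZMod.dft Φ) s := by
    rw [← hsin]; ring
  rw [hexp]
  field_simp
end

section
/- For natural numbers a ≤ q and k ≥ 0, the limit γ_k(a,q) := lim_{x→∞} ( ∑_{n ≤ x, n ≡ a mod q} (log^k n)/n − (log^{k+1} x)/(q(k+1)) ) exists. -/
open Finset Filter Topology

namespace StieltjesAux

noncomputable def f (k : ℕ) (t : ℝ) : ℝ := Real.log t ^ k / t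
noncomputable def L (k : ℕ) (t : ℝ) : ℝ := Real.log t ^ (k + 1) / (k + 1)

lemma f_nonneg (k : ℕ) {x : ℝ} (hx : 1 ≤ x) : 0 ≤ f k x := by
  have h0 : 0 < x := by linarith
  have : 0 ≤ Real.log x := Real.log_nonneg hx
  unfold f; positivity

lemma hasDerivAt_L (k : ℕ) {x : ℝ} (hx : 0 < x) : HasDerivAt (L k) (f k x) x := by
  have h := ((Real.hasDerivAt_log hx.ne').pow (k + 1)).div_const ((k : ℝ) + 1)
  have hk : ((k : ℝ) + 1) ≠ 0 := by positivity
  refine h.congr_deriv ?_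
  unfold f
  push_cast
  field_simp

lemma f_antitoneOn (k : ℕ) : AntitoneOn (f k) (Set.Ici (Real.exp k)) := by
  have hsub : Set.Ici (Real.exp k) ⊆ {(0:ℝ)}ᶜ := by
    intro x hx
    simp only [Set.mem_compl_iff, Set.mem_singleton_iff]
    have := Real.exp_pos (k : ℝ)
    have : (0:ℝ) < x := lt_of_lt_of_le this hx
    linarith
  have hderiv : ∀ x ∈ interior (Set.Ici (Real.exp (k:ℝ))),
      HasDerivAt (f k) (((k : ℝ) * Real.log x ^ (k - 1) * x⁻¹ * x - Real.log x ^ k * 1) / x ^ 2) x := by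
    intro x hx
    rw [interior_Ici] at hx
    have hx0 : 0 < x := lt_trans (Real.exp_pos _) hx
    exact ((Real.hasDerivAt_log hx0.ne').pow k).div (hasDerivAt_id x) hx0.ne'
  apply antitoneOn_of_deriv_nonpos (convex_Ici _)
  · exact ((Real.continuousOn_log.mono hsub).pow k).div continuousOn_id
      (fun x hx => by
        have := Real.exp_pos (k : ℝ)
        have : (0:ℝ) < x := lt_of_lt_of_le this hx
        exact ne_of_gt this)
  · intro x hx
    exact (hderiv x hx).differentiableAt.differentiableWithinAt
  · intro x hx
    rw [(hderiv x hx).deriv]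
    rw [interior_Ici] at hx
    have hx0 : 0 < x := lt_trans (Real.exp_pos _) hx
    have hlog : (k : ℝ) ≤ Real.log x := by
      rw [Real.le_log_iff_exp_le hx0]
      exact hx.le
    apply div_nonpos_of_nonpos_of_nonneg _ (by positivity)
    rw [mul_assoc ((k:ℝ) * Real.log x ^ (k-1)), inv_mul_cancel₀ hx0.ne', mul_one, mul_one]
    rcases Nat.eq_zero_or_pos k with rfl | hk
    · simp
    · have hk1 : k - 1 + 1 = k := Nat.succ_pred_eq_of_pos hk
      have hlog0 : (0:ℝ) ≤ Real.log x := le_trans (by positivity) hlog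
      have hpow : Real.log x ^ k = Real.log x ^ (k - 1) * Real.log x := by
        conv_lhs => rw [← hk1]
        rw [pow_succ]
      rw [hpow]
      have h0 : (0:ℝ) ≤ Real.log x ^ (k - 1) := by positivity
      nlinarith

lemma L_continuousOn (k : ℕ) : ContinuousOn (L k) {(0:ℝ)}ᶜ :=
  (Real.continuousOn_log.pow (k+1)).div_const _

/-- MVT bounds. -/
lemma key (k : ℕ) {s t : ℝ} (hs : Real.exp k ≤ s) (hst : s ≤ t) :
    f k t * (t - s) ≤ L k t - L k s ∧ L k t - L k s ≤ f k s * (t - s) := by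
  rcases eq_or_lt_of_le hst with rfl | h
  · simp
  have hs0 : 0 < s := lt_of_lt_of_le (Real.exp_pos _) hs
  have hsub : Set.Icc s t ⊆ {(0:ℝ)}ᶜ := by
    intro x hx
    simp only [Set.mem_compl_iff, Set.mem_singleton_iff]
    have := hx.1
    intro hx0; rw [hx0] at this; linarith
  obtain ⟨c, hc, hc2⟩ := exists_hasDerivAt_eq_slope (L k) (f k) h
    ((L_continuousOn k).mono hsub)
    (fun x hx => hasDerivAt_L k (lt_trans hs0 hx.1))
  have hcs : s ≤ c := hc.1.le
  have hct : c ≤ t := hc.2.le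
  have hmem_s : s ∈ Set.Ici (Real.exp (k:ℝ)) := hs
  have hmem_c : c ∈ Set.Ici (Real.exp (k:ℝ)) := le_trans hs hcs
  have hmem_t : t ∈ Set.Ici (Real.exp (k:ℝ)) := le_trans hs hst
  have h1 : f k t ≤ f k c := f_antitoneOn k hmem_c hmem_t hct
  have h2 : f k c ≤ f k s := f_antitoneOn k hmem_s hmem_c hcs
  have heq : L k t - L k s = f k c * (t - s) := by
    rw [hc2, div_mul_cancel₀ _ (sub_ne_zero.mpr h.ne')]
  constructor
  · rw [heq]; exact mul_le_mul_of_nonneg_right h1 (by linarith)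
  · rw [heq]; exact mul_le_mul_of_nonneg_right h2 (by linarith)

lemma f_tendsto (k : ℕ) : Tendsto (f k) atTop (𝓝 0) := by
  have := Real.tendsto_pow_log_div_mul_add_atTop 1 0 k one_ne_zero
  show Tendsto (fun t : ℝ => Real.log t ^ k / t) atTop (𝓝 0)
  simpa [f] using this

lemma filter_eq (q a : ℕ) (hq : 0 < q) (ha : 1 ≤ a) (haq : a ≤ q) (N : ℕ) (hN : a ≤ N) :
    (Finset.Icc 1 N).filter (fun n => n % q = a % q)
      = (Finset.range ((N - a) / q + 1)).image (fun j => a + j * q) := by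
  ext n
  simp only [mem_filter, mem_Icc, mem_image, mem_range, Nat.lt_succ_iff]
  constructor
  · rintro ⟨⟨h1, h2⟩, h3⟩
    have han : a ≤ n := by
      by_contra hc
      push_neg at hc
      have hd : q ∣ a - n := (Nat.modEq_iff_dvd' hc.le).mp h3
      have := Nat.le_of_dvd (by omega) hd
      omega
    obtain ⟨j, hj⟩ := (Nat.modEq_iff_dvd' han).mp h3.symm
    have hj' : n = a + j * q := by rw [mul_comm] at hj; omega
    refine ⟨j, ?_, hj'.symm⟩
    rw [Nat.le_div_iff_mul_le hq]
    omega
  · rintro ⟨j, hjle, rfl⟩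
    rw [Nat.le_div_iff_mul_le hq] at hjle
    refine ⟨⟨by omega, by omega⟩, ?_⟩
    simp [Nat.add_mul_mod_self_right]

end StieltjesAux

open StieltjesAux in
/-- The generalized Stieltjes constant `γ_k(a,q)` exists: the limit as `x → ∞` of
`∑_{n ≤ x, n ≡ a mod q} (log n)^k / n − (log x)^{k+1} / (q(k+1))`. -/
theorem generalized_stieltjes_exists (q a k : ℕ) (hq : 0 < q) (ha : 1 ≤ a) (haq : a ≤ q) :
    ∃ l : ℝ, Tendsto (fun x : ℝ =>
      (∑ n ∈ (Finset.Icc 1 ⌊x⌋₊).filter (fun n => n % q = a % q),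
        (Real.log n) ^ k / n) - (Real.log x) ^ (k + 1) / (q * (k + 1)))
      atTop (𝓝 l) := by
  classical
  have hq0 : (0:ℝ) < q := Nat.cast_pos.mpr hq
  have hq1 : (1:ℝ) ≤ q := Nat.one_le_cast.mpr hq
  have ha1 : (1:ℝ) ≤ a := Nat.one_le_cast.mpr ha
  set u : ℕ → ℝ := fun m => f k ((a + m * q : ℕ) : ℝ) with hu_def
  set G : ℕ → ℝ := fun m =>
    (∑ j ∈ Finset.range (m + 1), u j) - L k ((a + m * q : ℕ) : ℝ) / q with hG_def
  obtain ⟨m₀, hm₀⟩ := exists_nat_ge (Real.exp k)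
  have hcast1 : ∀ m : ℕ, (1:ℝ) ≤ ((a + m * q : ℕ) : ℝ) := by
    intro m
    push_cast
    have : (0:ℝ) ≤ (m:ℝ) * q := by positivity
    linarith
  have hT : ∀ m, m₀ ≤ m → Real.exp k ≤ ((a + m * q : ℕ) : ℝ) := by
    intro m hm
    have h1 : (m₀:ℝ) ≤ m := Nat.cast_le.mpr hm
    have h2 : (m:ℝ) ≤ (m:ℝ) * q := le_mul_of_one_le_right (Nat.cast_nonneg m) hq1
    push_cast
    linarith
  have hu_nonneg : ∀ m, 0 ≤ u m := fun m => f_nonneg k (hcast1 m)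
  -- step estimates
  have step : ∀ m, m₀ ≤ m → u (m + 1) - u m ≤ G (m + 1) - G m ∧ G (m + 1) - G m ≤ 0 := by
    intro m hm
    have hs := hT m hm
    have hst : ((a + m * q : ℕ) : ℝ) ≤ ((a + (m + 1) * q : ℕ) : ℝ) := by
      push_cast; nlinarith
    obtain ⟨h1, h2⟩ := key k hs hst
    have hdiff : ((a + (m + 1) * q : ℕ) : ℝ) - ((a + m * q : ℕ) : ℝ) = q := by
      push_cast; ring
    rw [hdiff] at h1 h2
    have hGdiff : G (m + 1) - G m = u (m + 1) -
        (L k ((a + (m + 1) * q : ℕ) : ℝ) - L k ((a + m * q : ℕ) : ℝ)) / q := by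
      simp only [hG_def, Finset.sum_range_succ]
      ring
    constructor
    · rw [hGdiff]
      have hle : (L k ((a + (m + 1) * q : ℕ) : ℝ) - L k ((a + m * q : ℕ) : ℝ)) / q ≤ u m := by
        rw [div_le_iff₀ hq0]; exact h2
      linarith
    · rw [hGdiff]
      have hle : u (m + 1) ≤
          (L k ((a + (m + 1) * q : ℕ) : ℝ) - L k ((a + m * q : ℕ) : ℝ)) / q := by
        rw [le_div_iff₀ hq0]; exact h1
      linarith
  -- lower bound chain
  have chain : ∀ m, G m₀ + u (m₀ + m) - u m₀ ≤ G (m₀ + m) := by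
    intro m
    induction m with
    | zero => simp
    | succ n ih =>
      have hst := (step (m₀ + n) (Nat.le_add_right _ _)).1
      have he : m₀ + (n + 1) = (m₀ + n) + 1 := by ring
      rw [he]
      linarith
  -- convergence of G
  have hH_anti : Antitone (fun m => G (m + m₀)) := by
    apply antitone_nat_of_succ_le
    intro n
    have h := (step (n + m₀) (Nat.le_add_left _ _)).2
    have he : n + 1 + m₀ = (n + m₀) + 1 := by ring
    rw [he]
    linarith
  have hbdd : BddBelow (Set.range fun m => G (m + m₀)) := by
    refine ⟨G m₀ - u m₀, ?_⟩
    rintro _ ⟨m, rfl⟩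
    have h1 := chain m
    have h2 := hu_nonneg (m₀ + m)
    show G m₀ - u m₀ ≤ G (m + m₀)
    have he : m + m₀ = m₀ + m := by ring
    rw [he]
    linarith
  have hH := tendsto_atTop_ciInf hH_anti hbdd
  have hG : Tendsto G atTop (𝓝 (⨅ m, G (m + m₀))) := (tendsto_add_atTop_iff_nat m₀).mp hH
  set lG : ℝ := ⨅ m, G (m + m₀) with hlG
  -- the floor-based index
  set M : ℝ → ℕ := fun x => (⌊x⌋₊ - a) / q with hM_def
  have hM : Tendsto M atTop atTop := by
    rw [tendsto_atTop_atTop]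
    intro b
    refine ⟨(a + b * q : ℕ), fun x hx => ?_⟩
    have hfl : (a + b * q : ℕ) ≤ ⌊x⌋₊ := Nat.le_floor hx
    simp only [hM_def]
    rw [Nat.le_div_iff_mul_le hq]
    omega
  have hu0 : Tendsto u atTop (𝓝 0) := by
    have h1 : Tendsto (fun m : ℕ => a + m * q) atTop atTop := by
      rw [tendsto_atTop_atTop]
      intro b
      refine ⟨b, fun m hm => ?_⟩
      have := Nat.le_mul_of_pos_right m hq
      omega
    exact (f_tendsto k).comp (tendsto_natCast_atTop_atTop.comp h1)
  -- error term
  set E : ℝ → ℝ := fun x => (L k x - L k ((a + M x * q : ℕ) : ℝ)) / q with hE_def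
  have hev : ∀ᶠ x : ℝ in atTop, (a:ℝ) ≤ x ∧ m₀ ≤ M x ∧ (1:ℝ) ≤ x :=
    (eventually_ge_atTop (a:ℝ)).and ((hM.eventually_ge_atTop m₀).and (eventually_ge_atTop 1))
  have hfacts : ∀ x : ℝ, (a:ℝ) ≤ x → m₀ ≤ M x → (1:ℝ) ≤ x →
      a ≤ ⌊x⌋₊ ∧ ((a + M x * q : ℕ) : ℝ) ≤ x ∧ x - ((a + M x * q : ℕ) : ℝ) ≤ q := by
    intro x hax hm hx1
    have hx0 : (0:ℝ) ≤ x := by linarith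
    have hNa : a ≤ ⌊x⌋₊ := Nat.le_floor hax
    have hdml : (⌊x⌋₊ - a) / q * q ≤ ⌊x⌋₊ - a := Nat.div_mul_le_self _ _
    have hsN : a + M x * q ≤ ⌊x⌋₊ := by simp only [hM_def]; omega
    have hsx : ((a + M x * q : ℕ) : ℝ) ≤ x :=
      le_trans (Nat.cast_le.mpr hsN) (Nat.floor_le hx0)
    have hlt : ⌊x⌋₊ - a < (M x + 1) * q := by
      have : (⌊x⌋₊ - a) / q < M x + 1 := by simp only [hM_def]; omega
      exact (Nat.div_lt_iff_lt_mul hq).mp this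
    have hN1 : ⌊x⌋₊ + 1 ≤ a + M x * q + q := by
      have : (M x + 1) * q = M x * q + q := by ring
      omega
    have hxlt : x < (⌊x⌋₊ : ℝ) + 1 := Nat.lt_floor_add_one x
    have hcast : ((⌊x⌋₊ : ℕ) : ℝ) + 1 ≤ ((a + M x * q : ℕ) : ℝ) + q := by
      have h := (Nat.cast_le (α := ℝ)).mpr hN1
      push_cast at h ⊢
      linarith [h]
    exact ⟨hNa, hsx, by linarith⟩
  have hE_lb : ∀ᶠ x : ℝ in atTop, 0 ≤ E x := by
    filter_upwards [hev] with x hx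
    obtain ⟨hax, hm, hx1⟩ := hx
    obtain ⟨hNa, hsx, hxs⟩ := hfacts x hax hm hx1
    have hTs := hT (M x) hm
    obtain ⟨h1, _⟩ := key k hTs hsx
    have hfx : 0 ≤ f k x := f_nonneg k hx1
    have : 0 ≤ L k x - L k ((a + M x * q : ℕ) : ℝ) := by nlinarith
    simp only [hE_def]
    positivity
  have hE_ub : ∀ᶠ x : ℝ in atTop, E x ≤ u (M x) := by
    filter_upwards [hev] with x hx
    obtain ⟨hax, hm, hx1⟩ := hx
    obtain ⟨hNa, hsx, hxs⟩ := hfacts x hax hm hx1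
    have hTs := hT (M x) hm
    obtain ⟨_, h2⟩ := key k hTs hsx
    have hfs : 0 ≤ u (M x) := hu_nonneg (M x)
    have hub : L k x - L k ((a + M x * q : ℕ) : ℝ) ≤ u (M x) * q := by
      calc L k x - L k ((a + M x * q : ℕ) : ℝ)
          ≤ f k ((a + M x * q : ℕ) : ℝ) * (x - ((a + M x * q : ℕ) : ℝ)) := h2
        _ ≤ u (M x) * q := by
            simp only [hu_def]
            apply mul_le_mul_of_nonneg_left hxs hfs
    simp only [hE_def]
    rw [div_le_iff₀ hq0]
    exact hub
  have hE0 : Tendsto E atTop (𝓝 0) :=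
    tendsto_of_tendsto_of_tendsto_of_le_of_le' tendsto_const_nhds (hu0.comp hM) hE_lb hE_ub
  -- eventual equality with the target function
  have heq : (fun x : ℝ => G (M x) - E x) =ᶠ[atTop] (fun x : ℝ =>
      (∑ n ∈ (Finset.Icc 1 ⌊x⌋₊).filter (fun n => n % q = a % q),
        (Real.log n) ^ k / n) - (Real.log x) ^ (k + 1) / (q * (k + 1))) := by
    filter_upwards [hev] with x hx
    obtain ⟨hax, hm, hx1⟩ := hx
    have hNa : a ≤ ⌊x⌋₊ := Nat.le_floor hax
    rw [filter_eq q a hq ha haq ⌊x⌋₊ hNa]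
    rw [Finset.sum_image (fun j1 _ j2 _ h => by
      have : j1 * q = j2 * q := by omega
      exact Nat.eq_of_mul_eq_mul_right hq this)]
    have hsum : ∑ j ∈ Finset.range ((⌊x⌋₊ - a) / q + 1),
        (Real.log ((a + j * q : ℕ) : ℝ)) ^ k / ((a + j * q : ℕ) : ℝ)
        = ∑ j ∈ Finset.range (M x + 1), u j := by
      simp only [hu_def, f, hM_def]
    rw [hsum]
    have hk1 : ((k:ℝ) + 1) ≠ 0 := by positivity
    simp only [hG_def, hE_def, L]
    push_cast
    field_simp
    ring
  refine ⟨lG, ?_⟩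
  have hfinal : Tendsto (fun x : ℝ => G (M x) - E x) atTop (𝓝 (lG - 0)) :=
    (hG.comp hM).sub hE0
  rw [sub_zero] at hfinal
  exact hfinal.congr' heq
end

section
/- Let f be a q-periodic arithmetical function with ∑_{a=1}^q f(a) = 0. Then for each k ≥ 0, the k-th derivative of L(s,f) at s = 1 satisfies L^{(k)}(1,f) = (-1)^k ∑_{a=1}^q f(a) γ_k(a,q), where γ_k(a,q) are the generalized Stieltjes constants. -/
open Finset Filter Topology

lemma abel_identity (c : ℕ → ℂ) (hc0 : c 0 = 0) (w : ℕ → ℝ) (N : ℕ) :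
    ∑ m ∈ Finset.range N, (∑ n ∈ Finset.range (m + 2), c n) * ((w (m + 1) - w (m + 2) : ℝ) : ℂ)
      = ∑ n ∈ Finset.range (N + 2), c n * ((w n : ℝ) : ℂ)
        - (∑ n ∈ Finset.range (N + 2), c n) * ((w (N + 1) : ℝ) : ℂ) := by
  induction N with
  | zero => simp [Finset.sum_range_succ, hc0]
  | succ N ih =>
      rw [Finset.sum_range_succ, ih, show N + 1 + 2 = (N + 2) + 1 by ring,
        Finset.sum_range_succ (f := fun n => c n * ((w n : ℝ) : ℂ)) (n := N + 2),
        Finset.sum_range_succ (f := c) (n := N + 2)]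
      push_cast
      ring

lemma abel_dirichlet (c : ℕ → ℂ) (hc0 : c 0 = 0) (S : ℂ)
    (hC : Tendsto (fun N => ∑ n ∈ Finset.range N, c n) atTop (𝓝 S))
    (hsm : ∀ ε : ℝ, 0 < ε → Summable (fun n : ℕ => ‖c n‖ * (n : ℝ) ^ (-ε))) :
    Tendsto (fun ε : ℝ => ∑' n : ℕ, c n * (((n : ℝ) ^ (-ε) : ℝ) : ℂ)) (𝓝[>] (0 : ℝ)) (𝓝 S) := by
  set C : ℕ → ℂ := fun N => ∑ n ∈ Finset.range N, c n with hCdef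
  obtain ⟨M, hM⟩ := (hC.norm).bddAbove_range
  simp only [mem_upperBounds, Set.mem_range, forall_exists_index] at hM
  have hMb : ∀ N, ‖C N‖ ≤ M := fun N => hM _ N rfl
  set D : ℝ → ℕ → ℝ := fun ε m => ((m + 1 : ℕ) : ℝ) ^ (-ε) - ((m + 2 : ℕ) : ℝ) ^ (-ε) with hDdef
  have hDnonneg : ∀ ε : ℝ, 0 < ε → ∀ m, 0 ≤ D ε m := by
    intro ε hε m
    have h1 : (0:ℝ) < ((m + 1 : ℕ) : ℝ) := by positivity
    have h2 : ((m + 1 : ℕ) : ℝ) ≤ ((m + 2 : ℕ) : ℝ) := by push_cast; linarith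
    have key : ((m + 2 : ℕ) : ℝ) ^ (-ε) ≤ ((m + 1 : ℕ) : ℝ) ^ (-ε) := by
      rw [Real.rpow_neg (by positivity), Real.rpow_neg (by positivity)]
      exact inv_anti₀ (Real.rpow_pos_of_pos h1 ε) (Real.rpow_le_rpow h1.le h2 hε.le)
    simp only [hDdef]
    linarith
  have hDtele : ∀ ε : ℝ, ∀ N : ℕ, ∑ m ∈ Finset.range N, D ε m
      = (((0 : ℕ) + 1 : ℕ) : ℝ) ^ (-ε) - ((N + 1 : ℕ) : ℝ) ^ (-ε) := by
    intro ε N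
    exact Finset.sum_range_sub' (f := fun m => ((m + 1 : ℕ) : ℝ) ^ (-ε)) N
  have hwlim : ∀ ε : ℝ, 0 < ε →
      Tendsto (fun N : ℕ => ((N + 1 : ℕ) : ℝ) ^ (-ε)) atTop (𝓝 0) := by
    intro ε hε
    have h1 : Tendsto (fun N : ℕ => ((N + 1 : ℕ) : ℝ)) atTop atTop :=
      tendsto_natCast_atTop_atTop.comp (tendsto_add_atTop_nat 1)
    exact (tendsto_rpow_neg_atTop hε).comp h1
  have hDhasSum : ∀ ε : ℝ, 0 < ε → HasSum (D ε) 1 := by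
    intro ε hε
    rw [hasSum_iff_tendsto_nat_of_nonneg (hDnonneg ε hε)]
    rw [tendsto_congr (hDtele ε)]
    have : (((0 : ℕ) + 1 : ℕ) : ℝ) ^ (-ε) = 1 := by norm_num
    rw [this]
    simpa using (tendsto_const_nhds (x := (1:ℝ))).sub (hwlim ε hε)
  have key : ∀ ε : ℝ, 0 < ε →
      (∑' n : ℕ, c n * (((n : ℝ) ^ (-ε) : ℝ) : ℂ)) - S
        = ∑' m : ℕ, (C (m + 2) - S) * ((D ε m : ℝ) : ℂ) := by
    intro ε hε
    have hcw : Summable (fun n : ℕ => c n * (((n : ℝ) ^ (-ε) : ℝ) : ℂ)) := by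
      refine Summable.of_norm ?_
      refine (hsm ε hε).congr fun n => ?_
      rw [norm_mul, Complex.norm_real, Real.norm_of_nonneg (Real.rpow_nonneg (by positivity) _)]
    set T : ℂ := ∑' n : ℕ, c n * (((n : ℝ) ^ (-ε) : ℝ) : ℂ) with hT
    have hg_tend : Tendsto (fun N : ℕ => ∑ m ∈ Finset.range N, C (m + 2) * ((D ε m : ℝ) : ℂ))
        atTop (𝓝 (T - 0)) := by
      have hident : ∀ N, ∑ m ∈ Finset.range N, C (m + 2) * ((D ε m : ℝ) : ℂ)
          = ∑ n ∈ Finset.range (N + 2), c n * ((((n : ℕ) : ℝ) ^ (-ε) : ℝ) : ℂ)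
            - C (N + 2) * ((((N + 1 : ℕ) : ℝ) ^ (-ε) : ℝ) : ℂ) :=
        fun N => abel_identity c hc0 (fun n => ((n : ℕ) : ℝ) ^ (-ε)) N
      rw [tendsto_congr hident]
      apply Tendsto.sub
      · exact (hcw.hasSum.tendsto_sum_nat).comp (tendsto_add_atTop_nat 2)
      · have h1 : Tendsto (fun N : ℕ => C (N + 2)) atTop (𝓝 S) :=
          hC.comp (tendsto_add_atTop_nat 2)
        have h2 : Tendsto (fun N : ℕ => ((((N + 1 : ℕ) : ℝ) ^ (-ε) : ℝ) : ℂ)) atTop (𝓝 0) := by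
          have := (Complex.continuous_ofReal.tendsto 0).comp (hwlim ε hε)
          simpa [Function.comp_def] using this
        simpa using h1.mul h2
    have hg_sm : Summable (fun m : ℕ => C (m + 2) * ((D ε m : ℝ) : ℂ)) := by
      refine Summable.of_norm ?_
      refine Summable.of_nonneg_of_le (fun m => norm_nonneg _) (fun m => ?_)
        (((hDhasSum ε hε).summable).mul_left M)
      rw [norm_mul, Complex.norm_real, Real.norm_of_nonneg (hDnonneg ε hε m)]
      exact mul_le_mul_of_nonneg_right (hMb _) (hDnonneg ε hε m)
    have hg_eq : (∑' m : ℕ, C (m + 2) * ((D ε m : ℝ) : ℂ)) = T - 0 :=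
      tendsto_nhds_unique hg_sm.hasSum.tendsto_sum_nat hg_tend
    have hSd : HasSum (fun m : ℕ => S * ((D ε m : ℝ) : ℂ)) S := by
      have h1 : HasSum (fun m : ℕ => ((D ε m : ℝ) : ℂ)) (1 : ℂ) := by
        have := (hDhasSum ε hε).mapL Complex.ofRealCLM
        simpa using this
      simpa using h1.mul_left S
    have hsub : HasSum (fun m : ℕ => C (m + 2) * ((D ε m : ℝ) : ℂ) - S * ((D ε m : ℝ) : ℂ))
        ((T - 0) - S) := by
      rw [← hg_eq]
      exact hg_sm.hasSum.sub hSd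
    simp only [← sub_mul] at hsub
    rw [sub_zero] at hsub
    exact hsub.tsum_eq.symm
  rw [Metric.tendsto_nhds]
  intro δ hδ
  obtain ⟨N₀, hN₀⟩ := Metric.tendsto_atTop.mp hC (δ / 3) (by linarith)
  have hhead : Tendsto (fun ε : ℝ => ∑ m ∈ Finset.range N₀, ‖C (m + 2) - S‖ * D ε m)
      (𝓝[>] (0 : ℝ)) (𝓝 0) := by
    have hterm : ∀ m : ℕ, Tendsto (fun ε : ℝ => ‖C (m + 2) - S‖ * D ε m)
        (𝓝[>] (0 : ℝ)) (𝓝 0) := by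
      intro m
      have t1 : ∀ a : ℕ, 0 < a → Tendsto (fun ε : ℝ => ((a : ℕ) : ℝ) ^ (-ε)) (𝓝 (0 : ℝ)) (𝓝 1) := by
        intro a ha
        have hca : ContinuousAt (fun x : ℝ => ((a : ℕ) : ℝ) ^ x) 0 :=
          Real.continuousAt_const_rpow (by positivity)
        have hneg : Tendsto (fun ε : ℝ => -ε) (𝓝 (0 : ℝ)) (𝓝 (0 : ℝ)) := by
          simpa using (continuous_neg.tendsto (0 : ℝ))
        have := hca.tendsto.comp hneg
        simpa [Real.rpow_zero, Function.comp_def] using this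
      have hD : Tendsto (fun ε : ℝ => D ε m) (𝓝 (0 : ℝ)) (𝓝 0) := by
        have := (t1 (m + 1) (by omega)).sub (t1 (m + 2) (by omega))
        simpa [hDdef] using this
      have := (hD.const_mul (‖C (m + 2) - S‖)).mono_left
        (nhdsWithin_le_nhds (s := Set.Ioi (0:ℝ)))
      simpa using this
    have := tendsto_finset_sum (Finset.range N₀) (fun m _ => hterm m)
    simpa using this
  have hev1 : ∀ᶠ ε in 𝓝[>] (0 : ℝ), ∑ m ∈ Finset.range N₀, ‖C (m + 2) - S‖ * D ε m < δ / 3 :=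
    hhead.eventually_lt_const (by linarith)
  filter_upwards [hev1, self_mem_nhdsWithin] with ε hhd hε
  rw [Set.mem_Ioi] at hε
  rw [dist_eq_norm, key ε hε]
  have hDsm := (hDhasSum ε hε).summable
  have hgn : ∀ m : ℕ, ‖(C (m + 2) - S) * ((D ε m : ℝ) : ℂ)‖ = ‖C (m + 2) - S‖ * D ε m := by
    intro m
    rw [norm_mul, Complex.norm_real, Real.norm_of_nonneg (hDnonneg ε hε m)]
  have hgsm : Summable (fun m : ℕ => ‖(C (m + 2) - S) * ((D ε m : ℝ) : ℂ)‖) := by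
    refine Summable.of_nonneg_of_le (fun m => norm_nonneg _) (fun m => ?_)
      (hDsm.mul_left (M + ‖S‖))
    rw [hgn m]
    refine mul_le_mul_of_nonneg_right ?_ (hDnonneg ε hε m)
    calc ‖C (m + 2) - S‖ ≤ ‖C (m + 2)‖ + ‖S‖ := norm_sub_le _ _
      _ ≤ M + ‖S‖ := by linarith [hMb (m + 2)]
  have hsplit := (hgsm.sum_add_tsum_nat_add N₀).symm
  have htail_le : ∑' m : ℕ, ‖(C (m + N₀ + 2) - S) * ((D ε (m + N₀) : ℝ) : ℂ)‖ ≤ δ / 3 := by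
    have hshift : Summable (fun m : ℕ => ‖(C (m + N₀ + 2) - S) * ((D ε (m + N₀) : ℝ) : ℂ)‖) :=
      (summable_nat_add_iff N₀).mpr hgsm
    have hDshift : Summable (fun m : ℕ => D ε (m + N₀)) := (summable_nat_add_iff N₀).mpr hDsm
    have h1 : ∑' m : ℕ, ‖(C (m + N₀ + 2) - S) * ((D ε (m + N₀) : ℝ) : ℂ)‖
        ≤ ∑' m : ℕ, (δ / 3) * D ε (m + N₀) := by
      refine Summable.tsum_le_tsum (fun m => ?_) hshift (hDshift.mul_left (δ / 3))
      rw [hgn (m + N₀)]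
      refine mul_le_mul_of_nonneg_right ?_ (hDnonneg ε hε (m + N₀))
      have := hN₀ (m + N₀ + 2) (by omega)
      rw [dist_eq_norm] at this
      exact this.le
    have h2 : ∑' m : ℕ, (δ / 3) * D ε (m + N₀) = (δ / 3) * ∑' m : ℕ, D ε (m + N₀) :=
      tsum_mul_left
    have h3 : ∑' m : ℕ, D ε (m + N₀) ≤ 1 := by
      have := hDsm.sum_add_tsum_nat_add N₀
      rw [(hDhasSum ε hε).tsum_eq] at this
      have hpos : 0 ≤ ∑ m ∈ Finset.range N₀, D ε m :=
        Finset.sum_nonneg (fun m _ => hDnonneg ε hε m)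
      linarith
    calc ∑' m : ℕ, ‖(C (m + N₀ + 2) - S) * ((D ε (m + N₀) : ℝ) : ℂ)‖
        ≤ (δ / 3) * ∑' m : ℕ, D ε (m + N₀) := by rw [← h2]; exact h1
      _ ≤ (δ / 3) * 1 := by
          refine mul_le_mul_of_nonneg_left h3 (by linarith)
      _ = δ / 3 := by ring
  have hhd' : ∑ m ∈ Finset.range N₀, ‖(C (m + 2) - S) * ((D ε m : ℝ) : ℂ)‖ < δ / 3 := by
    rw [Finset.sum_congr rfl (fun m _ => hgn m)]
    exact hhd
  calc ‖∑' m : ℕ, (C (m + 2) - S) * ((D ε m : ℝ) : ℂ)‖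
      ≤ ∑' m : ℕ, ‖(C (m + 2) - S) * ((D ε m : ℝ) : ℂ)‖ := norm_tsum_le_tsum_norm hgsm
    _ = ∑ m ∈ Finset.range N₀, ‖(C (m + 2) - S) * ((D ε m : ℝ) : ℂ)‖
        + ∑' m : ℕ, ‖(C (m + N₀ + 2) - S) * ((D ε (m + N₀) : ℝ) : ℂ)‖ := by
        rw [← hgsm.sum_add_tsum_nat_add N₀]
    _ < δ / 3 + δ / 3 := by
        have := add_lt_add_of_lt_of_le hhd' htail_le
        exact this
    _ < δ := by linarith

lemma iteratedDeriv_eventuallyEq {g h : ℂ → ℂ} {x : ℂ} (he : g =ᶠ[𝓝 x] h) (k : ℕ) :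
    iteratedDeriv k g =ᶠ[𝓝 x] iteratedDeriv k h := by
  induction k with
  | zero => simpa using he
  | succ k ih => simpa [iteratedDeriv_succ] using ih.deriv

/-- If `f` is `q`-periodic with `∑_{a=1}^q f a = 0`, then the `k`-th derivative at `s = 1`
of the entire continuation `L(s,f)` of `∑ f(n) n^{-s}` equals
`(-1)^k ∑_{a=1}^q f a · γ_k(a,q)`, where `γ_k(a,q)` are the generalized Stieltjes constants. -/
theorem iteratedDeriv_L_eq_stieltjes (q : ℕ) (hq : 0 < q) (f : ℕ → ℂ)
    (hper : ∀ n : ℕ, f (n + q) = f n)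
    (hsum : ∑ a ∈ Finset.Icc 1 q, f a = 0)
    (L : ℂ → ℂ) (hLdiff : Differentiable ℂ L)
    (hLser : ∀ s : ℂ, 1 < s.re → L s = ∑' n : ℕ, f (n + 1) / ((n : ℂ) + 1) ^ s)
    (k : ℕ) (γ : ℕ → ℝ)
    (hγ : ∀ a ∈ Finset.Icc 1 q, Tendsto (fun x : ℝ =>
      (∑ n ∈ (Finset.Icc 1 ⌊x⌋₊).filter (fun n => n % q = a % q),
        (Real.log n) ^ k / n) - (Real.log x) ^ (k + 1) / (q * (k + 1)))
      atTop (𝓝 (γ a))) :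
    iteratedDeriv k L 1 = (-1) ^ k * ∑ a ∈ Finset.Icc 1 q, f a * (γ a : ℂ) := by
  -- f depends only on residue mod q
  have f_mod : ∀ n : ℕ, f n = f (n % q) := by
    intro n
    induction n using Nat.strong_induction_on with
    | _ n ih =>
      rcases lt_or_ge n q with h | h
      · rw [Nat.mod_eq_of_lt h]
      · obtain ⟨m, rfl⟩ := Nat.exists_eq_add_of_le h
        rw [add_comm, hper, ih m (by omega), Nat.add_mod_right]
  have f_bdd : ∃ Cb : ℝ, ∀ n : ℕ, ‖f n‖ ≤ Cb := by
    refine ⟨(Finset.range q).sup' ⟨0, Finset.mem_range.mpr hq⟩ (fun i => ‖f i‖), fun n => ?_⟩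
    rw [f_mod n]
    exact Finset.le_sup' (fun i => ‖f i‖) (Finset.mem_range.mpr (Nat.mod_lt _ hq))
  have habs : LSeries.abscissaOfAbsConv f ≤ 1 := by
    obtain ⟨Cb, hCb⟩ := f_bdd
    exact LSeries.abscissaOfAbsConv_le_of_le_const ⟨Cb, fun n _ => hCb n⟩
  -- L agrees with LSeries f on re > 1
  have hLeq : ∀ s : ℂ, 1 < s.re → L s = LSeries f s := by
    intro s hs
    rw [hLser s hs, LSeries]
    have hsum' : LSeriesSummable f s :=
      LSeriesSummable_of_abscissaOfAbsConv_lt_re (habs.trans_lt (by exact_mod_cast hs))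
    rw [hsum'.tsum_eq_zero_add, LSeries.term_zero, zero_add]
    refine tsum_congr fun n => ?_
    rw [LSeries.term_of_ne_zero (Nat.succ_ne_zero n)]
    push_cast
    ring
  -- the coefficient sequence
  set c : ℕ → ℂ := fun n => f n * (((Real.log n) ^ k / n : ℝ) : ℂ) with hcdef
  have hc0 : c 0 = 0 := by simp [hcdef]
  set S : ℂ := ∑ a ∈ Finset.Icc 1 q, f a * (γ a : ℂ) with hSdef
  -- fiberwise decomposition of partial sums
  have hfib : ∀ m : ℕ, ∑ n ∈ Finset.Icc 1 m, c n
      = ∑ a ∈ Finset.Icc 1 q, f a *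
          (((∑ n ∈ (Finset.Icc 1 m).filter (fun n => n % q = a % q), (Real.log n) ^ k / n)
            : ℝ) : ℂ) := by
    intro m
    set rep : ℕ → ℕ := fun n => if n % q = 0 then q else n % q with hrep
    have hmaps : ∀ n ∈ Finset.Icc 1 m, rep n ∈ Finset.Icc 1 q := by
      intro n hn
      have h1 : n % q < q := Nat.mod_lt _ hq
      simp only [hrep, Finset.mem_Icc]
      split_ifs with h <;> omega
    have hiff : ∀ a, 1 ≤ a → a ≤ q → ∀ n : ℕ, (rep n = a ↔ n % q = a % q) := by
      intro a ha1 ha2 n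
      have h1 : n % q < q := Nat.mod_lt _ hq
      rcases eq_or_lt_of_le ha2 with rfl | hlt
      · simp only [hrep, Nat.mod_self]
        split_ifs with h <;> omega
      · have h2 : a % q = a := Nat.mod_eq_of_lt hlt
        rw [h2]
        simp only [hrep]
        split_ifs with h <;> omega
    rw [← Finset.sum_fiberwise_of_maps_to hmaps c]
    refine Finset.sum_congr rfl fun a ha => ?_
    rw [Finset.mem_Icc] at ha
    have hfilt : (Finset.Icc 1 m).filter (fun n => rep n = a)
        = (Finset.Icc 1 m).filter (fun n => n % q = a % q) :=
      Finset.filter_congr fun n _ => by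
        simpa using hiff a ha.1 ha.2 n
    rw [hfilt]
    push_cast
    rw [Finset.mul_sum]
    refine Finset.sum_congr rfl fun n hn => ?_
    rw [Finset.mem_filter] at hn
    have hfa : f n = f a := by rw [f_mod n, hn.2, ← f_mod a]
    rw [hcdef]
    dsimp only
    rw [hfa]
    push_cast
    ring
  -- limit of partial sums over Icc 1 m
  have hpartial : Tendsto (fun m : ℕ => ∑ n ∈ Finset.Icc 1 m, c n) atTop (𝓝 S) := by
    have h1 : ∀ a ∈ Finset.Icc 1 q, Tendsto (fun m : ℕ =>
        f a * ((((∑ n ∈ (Finset.Icc 1 m).filter (fun n => n % q = a % q),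
            (Real.log n) ^ k / n) - (Real.log m) ^ (k + 1) / (q * (k + 1))) : ℝ) : ℂ))
        atTop (𝓝 (f a * (γ a : ℂ))) := by
      intro a ha
      have h2 := (hγ a ha).comp tendsto_natCast_atTop_atTop
      have h3 := ((Complex.continuous_ofReal.tendsto _).comp h2).const_mul (f a)
      refine h3.congr fun m => ?_
      simp [Function.comp, Nat.floor_natCast]
    have h4 := tendsto_finset_sum (Finset.Icc 1 q) h1
    rw [← hSdef] at h4
    refine h4.congr fun m => ?_
    have expand : ∀ a ∈ Finset.Icc 1 q,
        f a * ((((∑ n ∈ (Finset.Icc 1 m).filter (fun n => n % q = a % q),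
            (Real.log n) ^ k / n) - (Real.log m) ^ (k + 1) / (q * (k + 1))) : ℝ) : ℂ)
        = f a * (((∑ n ∈ (Finset.Icc 1 m).filter (fun n => n % q = a % q),
            (Real.log n) ^ k / n) : ℝ) : ℂ)
          - f a * (((Real.log m) ^ (k + 1) / (q * (k + 1)) : ℝ) : ℂ) := by
      intro a _
      push_cast
      ring
    rw [Finset.sum_congr rfl expand, Finset.sum_sub_distrib, ← Finset.sum_mul, hsum, zero_mul,
      sub_zero, hfib m]
  -- limit of partial sums over range N
  have hrange : Tendsto (fun N : ℕ => ∑ n ∈ Finset.range N, c n) atTop (𝓝 S) := by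
    have h0 : ∀ N : ℕ, ∑ n ∈ Finset.range N, c n = ∑ n ∈ Finset.Icc 1 (N - 1), c n := by
      intro N
      rcases Nat.eq_zero_or_pos N with rfl | hN
      · simp
      · rw [← Finset.Ico_add_one_right_eq_Icc, show N - 1 + 1 = N by omega, Finset.range_eq_Ico]
        refine (Finset.sum_subset (Finset.Ico_subset_Ico (by omega) le_rfl) ?_).symm
        intro x hx hnx
        have : x = 0 := by
          simp only [Finset.mem_Ico] at hx hnx
          omega
        rw [this, hc0]
    have h1 := hpartial.comp (tendsto_sub_atTop_nat 1)
    exact h1.congr fun N => (h0 N).symm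
  -- the pointwise values of logMul^[k] f
  have hlogpow : ∀ (j : ℕ) (n : ℕ), (LSeries.logMul^[j] f) n = (Complex.log n) ^ j * f n := by
    intro j
    induction j with
    | zero => intro n; simp
    | succ j ih =>
        intro n
        rw [Function.iterate_succ_apply']
        show Complex.log n * (LSeries.logMul^[j] f) n = _
        rw [ih n, pow_succ]
        ring
  -- terms of the L-series of logMul^[k] f at s = 1 + ε
  have hterm_eq : ∀ (ε : ℝ), 0 < ε → ∀ n : ℕ,
      LSeries.term (LSeries.logMul^[k] f) (1 + (ε : ℂ)) n
        = c n * (((n : ℝ) ^ (-ε) : ℝ) : ℂ) := by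
    intro ε hε n
    rcases Nat.eq_zero_or_pos n with rfl | hn
    · rw [LSeries.term_zero, hc0, zero_mul]
    · rw [LSeries.term_of_ne_zero (by omega), hlogpow k n, ← Complex.natCast_log]
      have hne : (n : ℂ) ≠ 0 := Nat.cast_ne_zero.mpr (by omega)
      rw [Complex.cpow_add _ _ hne, Complex.cpow_one]
      have hcast : (n : ℂ) ^ (ε : ℂ) = (((n : ℝ) ^ ε : ℝ) : ℂ) := by
        rw [Complex.ofReal_cpow (by positivity : (0:ℝ) ≤ (n:ℝ)) ε]
        norm_cast
      rw [hcast]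
      have hnR : (0 : ℝ) < (n : ℝ) := by positivity
      rw [Real.rpow_neg hnR.le]
      have hpne : ((n : ℝ) ^ ε : ℝ) ≠ 0 := ne_of_gt (Real.rpow_pos_of_pos hnR ε)
      rw [hcdef]
      dsimp only
      push_cast
      rw [div_mul_eq_div_div]
      field_simp
  -- summability of the weighted norms
  have hsm : ∀ ε : ℝ, 0 < ε → Summable (fun n : ℕ => ‖c n‖ * (n : ℝ) ^ (-ε)) := by
    intro ε hε
    have h1 : LSeriesSummable (LSeries.logMul^[k] f) (1 + (ε : ℂ)) := by
      apply LSeriesSummable_of_abscissaOfAbsConv_lt_re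
      rw [LSeries.absicssaOfAbsConv_logPowMul]
      refine habs.trans_lt ?_
      have : ((1 : ℂ) + (ε : ℂ)).re = 1 + ε := by simp
      rw [this]
      exact_mod_cast (by linarith : (1 : ℝ) < 1 + ε)
    have h2 := summable_norm_iff.mpr h1
    refine h2.congr fun n => ?_
    rw [hterm_eq ε hε n, norm_mul, Complex.norm_real,
      Real.norm_of_nonneg (Real.rpow_nonneg (by positivity) _)]
  -- Abel limit
  have habel := abel_dirichlet c hc0 S hrange hsm
  set e : ℕ → ℝ := fun j => (1 : ℝ) / (j + 1) with hedef
  have he_pos : ∀ j, 0 < e j := fun j => by positivity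
  have he_to : Tendsto e atTop (𝓝[>] (0 : ℝ)) := by
    rw [tendsto_nhdsWithin_iff]
    exact ⟨tendsto_one_div_add_atTop_nhds_zero_nat,
      Eventually.of_forall fun j => he_pos j⟩
  have hTlim := habel.comp he_to
  -- continuity of the iterated derivative of L
  have hcont : Continuous (iteratedDeriv k L) :=
    ContDiff.continuous_iteratedDeriv k (hLdiff.contDiff) le_rfl
  have hs_to : Tendsto (fun j : ℕ => (1 : ℂ) + ((e j : ℝ) : ℂ)) atTop (𝓝 1) := by
    have h1 := (Complex.continuous_ofReal.tendsto 0).comp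
      (he_to.mono_right nhdsWithin_le_nhds)
    simpa using (tendsto_const_nhds (x := (1 : ℂ))).add h1
  have hL1 := (hcont.tendsto 1).comp hs_to
  -- value along the sequence
  have hval : ∀ j : ℕ, iteratedDeriv k L ((1 : ℂ) + ((e j : ℝ) : ℂ))
      = (-1) ^ k * ∑' n : ℕ, c n * (((n : ℝ) ^ (-(e j)) : ℝ) : ℂ) := by
    intro j
    have hre : 1 < ((1 : ℂ) + ((e j : ℝ) : ℂ)).re := by
      simp only [Complex.add_re, Complex.one_re, Complex.ofReal_re]
      linarith [he_pos j]
    have hopen : IsOpen {s : ℂ | 1 < s.re} := isOpen_lt continuous_const Complex.continuous_re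
    have hev : L =ᶠ[𝓝 ((1 : ℂ) + ((e j : ℝ) : ℂ))] LSeries f := by
      filter_upwards [hopen.mem_nhds hre] with s hs
      exact hLeq s hs
    rw [(iteratedDeriv_eventuallyEq hev k).eq_of_nhds,
      LSeries_iteratedDeriv k (habs.trans_lt (by exact_mod_cast hre))]
    congr 1
    exact tsum_congr fun n => hterm_eq (e j) (he_pos j) n
  have hfinal : Tendsto (fun j : ℕ => iteratedDeriv k L ((1 : ℂ) + ((e j : ℝ) : ℂ)))
      atTop (𝓝 ((-1) ^ k * S)) := by
    have := hTlim.const_mul ((-1 : ℂ) ^ k)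
    exact this.congr fun j => (hval j).symm
  exact tendsto_nhds_unique hL1 hfinal
end

section
/- Let p be a prime and let f_j be the p-periodic odd function equal to 1 at residues ≡ j mod p and -1 at residues ≡ -j mod p, zero otherwise (1 ≤ j ≤ (p-1)/2). Then L(1,f_j) = ∑_{n=1}^∞ f_j(n)/n ≠ 0. -/
open Finset Filter Topology

/-- For an odd prime `p` and `1 ≤ j ≤ (p-1)/2`, the `L`-series at `1` of the odd
`p`-periodic function `f_j` (equal to `1` on residues `≡ j`, `-1` on residues `≡ -j`,
`0` otherwise) converges and is nonzero. -/
theorem L_one_fj_ne_zero (p : ℕ) (hp : p.Prime) (hp2 : 2 < p)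
    (j : ℕ) (hj1 : 1 ≤ j) (hj2 : j ≤ (p - 1) / 2)
    (f : ℤ → ℂ)
    (hf : ∀ n : ℤ, f n =
      if (n : ZMod p) = (j : ZMod p) then 1
      else if (n : ZMod p) = -(j : ZMod p) then -1 else 0) :
    ∃ l : ℂ, l ≠ 0 ∧
      Tendsto (fun N : ℕ => ∑ n ∈ Finset.Icc 1 N, f n / n) atTop (𝓝 l) := by
  have hp0 : 0 < p := hp.pos
  have h2j : 2 * j < p := by omega
  have hjp : j < p := by omega
  have hpj1 : 1 ≤ p - j := by omega
  have hpjp : p - j < p := by omega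
  have hjne : j ≠ p - j := by omega
  -- description of f on naturals
  have hfn : ∀ n : ℕ, f n =
      if n % p = j then 1 else if n % p = p - j then -1 else 0 := by
    intro n
    have h1 : (((n : ℤ)) : ZMod p) = (j : ZMod p) ↔ n % p = j := by
      push_cast
      rw [ZMod.natCast_eq_natCast_iff, Nat.ModEq, Nat.mod_eq_of_lt hjp]
    have hpm : ((p - j : ℕ) : ZMod p) = -(j : ZMod p) := by
      rw [Nat.cast_sub hjp.le, ZMod.natCast_self, zero_sub]
    have h2 : (((n : ℤ)) : ZMod p) = -(j : ZMod p) ↔ n % p = p - j := by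
      rw [← hpm]
      push_cast
      rw [ZMod.natCast_eq_natCast_iff, Nat.ModEq, Nat.mod_eq_of_lt hpjp]
    rw [hf]
    simp only [h1, h2]
  have hblock : ∀ k : ℕ, ∑ n ∈ Finset.Ico (k * p) (k * p + p), f n / n
      = 1 / ((k * p + j : ℕ) : ℂ) - 1 / ((k * p + (p - j) : ℕ) : ℂ) := by
    intro k
    rw [Finset.sum_Ico_eq_sum_range]
    simp only [Nat.add_sub_cancel_left]
    have key : ∀ i ∈ Finset.range p, f (k * p + i : ℕ) / ((k * p + i : ℕ) : ℂ)
        = (if i = j then 1 / ((k * p + j : ℕ) : ℂ) else 0)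
          + (if i = p - j then -(1 / ((k * p + (p - j) : ℕ) : ℂ)) else 0) := by
      intro i hi
      have hi' : i < p := Finset.mem_range.mp hi
      have hmod : (k * p + i) % p = i := by
        rw [Nat.add_comm, Nat.add_mul_mod_self_right, Nat.mod_eq_of_lt hi']
      rw [hfn, hmod]
      by_cases h1 : i = j
      · subst h1
        simp [hjne]
      · by_cases h2 : i = p - j
        · subst h2
          simp [h1, neg_div]
        · simp [h1, h2]
    rw [Finset.sum_congr rfl key, Finset.sum_add_distrib,
      Finset.sum_ite_eq' (Finset.range p) j, Finset.sum_ite_eq' (Finset.range p) (p - j)]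
    simp [Finset.mem_range.mpr hjp, Finset.mem_range.mpr hpjp, sub_eq_add_neg]
  have hrangeB : ∀ K : ℕ, ∑ n ∈ Finset.range (K * p), f n / n
      = ∑ k ∈ Finset.range K,
          (1 / ((k * p + j : ℕ) : ℂ) - 1 / ((k * p + (p - j) : ℕ) : ℂ)) := by
    intro K
    induction K with
    | zero => simp
    | succ K ih =>
      have hmul : (K + 1) * p = K * p + p := by ring
      rw [hmul, Finset.range_eq_Ico,
        ← Finset.sum_Ico_consecutive (fun n : ℕ => f n / (n : ℂ)) (Nat.zero_le (K * p))
          (Nat.le_add_right (K * p) p),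
        ← Finset.range_eq_Ico, ih, hblock, Finset.sum_range_succ]
  -- the real block values
  set a : ℕ → ℝ := fun k => 1 / ((k * p + j : ℕ) : ℝ) - 1 / ((k * p + (p - j) : ℕ) : ℝ)
    with ha
  have hx : ∀ k : ℕ, (0 : ℝ) < ((k * p + j : ℕ) : ℝ) := by
    intro k; exact_mod_cast Nat.lt_of_lt_of_le hj1 (Nat.le_add_left _ _)
  have hy : ∀ k : ℕ, (0 : ℝ) < ((k * p + (p - j) : ℕ) : ℝ) := by
    intro k; exact_mod_cast Nat.lt_of_lt_of_le hpj1 (Nat.le_add_left _ _)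
  have hxy : ∀ k : ℕ, ((k * p + j : ℕ) : ℝ) < ((k * p + (p - j) : ℕ) : ℝ) := by
    intro k; exact_mod_cast (by omega : k * p + j < k * p + (p - j))
  have hapos : ∀ k : ℕ, 0 < a k := by
    intro k
    exact sub_pos.mpr (one_div_lt_one_div_of_lt (hx k) (hxy k))
  have hk1x : ∀ k : ℕ, ((k + 1 : ℕ) : ℝ) ≤ ((k * p + j : ℕ) : ℝ) := by
    intro k
    have : k * 1 ≤ k * p := Nat.mul_le_mul_left k hp0
    exact_mod_cast (by omega : k + 1 ≤ k * p + j)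
  have hk1y : ∀ k : ℕ, ((k + 1 : ℕ) : ℝ) ≤ ((k * p + (p - j) : ℕ) : ℝ) := by
    intro k
    have : k * 1 ≤ k * p := Nat.mul_le_mul_left k hp0
    exact_mod_cast (by omega : k + 1 ≤ k * p + (p - j))
  have habd : ∀ k : ℕ, a k ≤ (p : ℝ) / ((k + 1 : ℕ) : ℝ) ^ 2 := by
    intro k
    have hxk := hx k; have hyk := hy k
    have hrw : a k = (((k * p + (p - j) : ℕ) : ℝ) - ((k * p + j : ℕ) : ℝ))
        / (((k * p + j : ℕ) : ℝ) * ((k * p + (p - j) : ℕ) : ℝ)) := by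
      simp only [ha]; rw [div_sub_div _ _ hxk.ne' hyk.ne']; ring
    rw [hrw]
    have hnum : ((k * p + (p - j) : ℕ) : ℝ) - ((k * p + j : ℕ) : ℝ) ≤ (p : ℝ) := by
      push_cast [Nat.cast_sub hjp.le]
      linarith [Nat.cast_nonneg (α := ℝ) j]
    have hden : (((k + 1 : ℕ) : ℝ)) ^ 2 ≤ ((k * p + j : ℕ) : ℝ) * ((k * p + (p - j) : ℕ) : ℝ) := by
      have h1 := hk1x k; have h2 := hk1y k
      have h0 : (0 : ℝ) ≤ ((k + 1 : ℕ) : ℝ) := by positivity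
      nlinarith
    have hk0 : (0 : ℝ) < ((k + 1 : ℕ) : ℝ) ^ 2 := by positivity
    exact div_le_div₀ (by positivity) hnum hk0 hden
  have hsb : Summable (fun k : ℕ => (p : ℝ) / ((k + 1 : ℕ) : ℝ) ^ 2) := by
    have h1 : Summable (fun k : ℕ => 1 / ((k : ℝ) ^ 2)) := by
      rw [Real.summable_one_div_nat_pow]; norm_num
    have h2 : Summable (fun k : ℕ => 1 / (((k + 1 : ℕ) : ℝ) ^ 2)) := by
      exact_mod_cast (summable_nat_add_iff 1).mpr h1
    simpa [div_eq_mul_inv, one_mul] using h2.mul_left (p : ℝ)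
  have hsa : Summable a :=
    Summable.of_nonneg_of_le (fun k => (hapos k).le) habd hsb
  set l : ℝ := ∑' k, a k with hl
  have hlpos : 0 < l := Summable.tsum_pos hsa (fun k => (hapos k).le) 0 (hapos 0)
  have hT : Tendsto (fun K : ℕ => ∑ k ∈ Finset.range K, a k) atTop (𝓝 l) :=
    hsa.hasSum.tendsto_sum_nat
  -- key decomposition
  set K : ℕ → ℕ := fun N => N / p + 1 with hK
  have hNK : ∀ N : ℕ, N + 1 ≤ K N * p := by
    intro N
    have hdm : p * (N / p) + N % p = N := Nat.div_add_mod N p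
    have hm : N % p < p := Nat.mod_lt N hp0
    have hexp : K N * p = p * (N / p) + p := by rw [hK]; ring
    omega
  have hKN : ∀ N : ℕ, K N * p ≤ N + p := by
    intro N
    have h1 : p * (N / p) ≤ N := Nat.mul_div_le N p
    have hexp : K N * p = p * (N / p) + p := by rw [hK]; ring
    omega
  have hsplit : ∀ N : ℕ, ∑ n ∈ Finset.Icc 1 N, f n / n
      = ∑ k ∈ Finset.range (K N),
          (1 / ((k * p + j : ℕ) : ℂ) - 1 / ((k * p + (p - j) : ℕ) : ℂ))
        - ∑ n ∈ Finset.Ico (N + 1) (K N * p), f n / n := by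
    intro N
    have hIcc : Finset.Icc 1 N = Finset.Ico 1 (N + 1) := by
      rw [Finset.Ico_add_one_right_eq_Icc]
    have hf0 : f (0 : ℕ) / ((0 : ℕ) : ℂ) = 0 := by simp
    have h01 : ∑ n ∈ Finset.Ico 0 (N + 1), f n / n = ∑ n ∈ Finset.Ico 1 (N + 1), f n / n := by
      rw [← Finset.sum_Ico_consecutive (fun n : ℕ => f n / (n : ℂ)) (Nat.zero_le 1)
          (by omega : 1 ≤ N + 1)]
      simp [hf0]
    have hsum : ∑ n ∈ Finset.range (K N * p), f n / n
        = ∑ n ∈ Finset.Ico 0 (N + 1), f n / n + ∑ n ∈ Finset.Ico (N + 1) (K N * p), f n / n := by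
      rw [Finset.range_eq_Ico,
        ← Finset.sum_Ico_consecutive (fun n : ℕ => f n / (n : ℂ)) (Nat.zero_le (N + 1)) (hNK N)]
    rw [hIcc, ← h01, eq_sub_iff_add_eq, ← hsum, hrangeB]
  -- cast lemma
  have hcast : ∀ Kk : ℕ, ((∑ k ∈ Finset.range Kk, a k : ℝ) : ℂ)
      = ∑ k ∈ Finset.range Kk,
          (1 / ((k * p + j : ℕ) : ℂ) - 1 / ((k * p + (p - j) : ℕ) : ℂ)) := by
    intro Kk
    push_cast [ha]
    rfl
  -- the error term tends to 0
  have hfb : ∀ n : ℕ, ‖f n‖ ≤ 1 := by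
    intro n
    rw [hfn]
    by_cases h1 : n % p = j
    · simp [h1]
    · by_cases h2 : n % p = p - j <;> simp [h1, h2, Ne.symm hjne]
  have hEbd : ∀ N : ℕ, ‖∑ n ∈ Finset.Ico (N + 1) (K N * p), f n / n‖
      ≤ (p : ℝ) / ((N + 1 : ℕ) : ℝ) := by
    intro N
    calc ‖∑ n ∈ Finset.Ico (N + 1) (K N * p), f n / n‖
        ≤ ∑ n ∈ Finset.Ico (N + 1) (K N * p), ‖f n / (n : ℂ)‖ := norm_sum_le _ _
      _ ≤ ∑ _n ∈ Finset.Ico (N + 1) (K N * p), (1 / ((N + 1 : ℕ) : ℝ)) := by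
          apply Finset.sum_le_sum
          intro n hn
          have hn1 : N + 1 ≤ n := (Finset.mem_Ico.mp hn).1
          have hn0 : (0 : ℝ) < ((N + 1 : ℕ) : ℝ) := by positivity
          have hnn : ((N + 1 : ℕ) : ℝ) ≤ (n : ℝ) := by exact_mod_cast hn1
          rw [norm_div]
          have h1 : ‖(n : ℂ)‖ = (n : ℝ) := by
            simp [Complex.norm_natCast]
          rw [h1]
          exact div_le_div₀ zero_le_one (hfb n) hn0 hnn
      _ = ((K N * p - (N + 1) : ℕ) : ℝ) * (1 / ((N + 1 : ℕ) : ℝ)) := by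
          rw [Finset.sum_const, Nat.card_Ico, nsmul_eq_mul]
      _ ≤ (p : ℝ) * (1 / ((N + 1 : ℕ) : ℝ)) := by
          have hc : K N * p - (N + 1) ≤ p := by
            have := hKN N; omega
          have : ((K N * p - (N + 1) : ℕ) : ℝ) ≤ (p : ℝ) := by exact_mod_cast hc
          have h0 : (0 : ℝ) ≤ 1 / ((N + 1 : ℕ) : ℝ) := by positivity
          exact mul_le_mul_of_nonneg_right this h0
      _ = (p : ℝ) / ((N + 1 : ℕ) : ℝ) := by ring
  have hE0 : Tendsto (fun N : ℕ => ∑ n ∈ Finset.Ico (N + 1) (K N * p), f n / n)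
      atTop (𝓝 0) := by
    apply squeeze_zero_norm hEbd
    have h1 : Tendsto (fun n : ℕ => (p : ℝ) / (n : ℝ)) atTop (𝓝 0) :=
      tendsto_const_div_atTop_nhds_zero_nat (p : ℝ)
    have h2 : Tendsto (fun N : ℕ => N + 1) atTop atTop := tendsto_add_atTop_nat 1
    have := h1.comp h2
    simpa [Function.comp_def] using this
  have hKtop : Tendsto K atTop atTop := by
    rw [hK]
    apply tendsto_atTop_atTop.mpr
    intro b
    refine ⟨b * p, fun n hn => ?_⟩
    have h1 : b * p / p ≤ n / p := Nat.div_le_div_right hn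
    rw [Nat.mul_div_cancel b hp0] at h1
    omega
  have hT1 : Tendsto (fun N : ℕ => ((∑ k ∈ Finset.range (K N), a k : ℝ) : ℂ))
      atTop (𝓝 (l : ℂ)) := by
    exact (Complex.continuous_ofReal.tendsto l).comp (hT.comp hKtop)
  refine ⟨(l : ℂ), by exact_mod_cast hlpos.ne', ?_⟩
  have hfin : Tendsto (fun N : ℕ =>
      ((∑ k ∈ Finset.range (K N), a k : ℝ) : ℂ)
        - ∑ n ∈ Finset.Ico (N + 1) (K N * p), f n / n) atTop (𝓝 ((l : ℂ) - 0)) :=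
    hT1.sub hE0
  rw [sub_zero] at hfin
  apply hfin.congr
  intro N
  rw [hcast, ← hsplit]
end
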